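/- arXiv:2209.13950 — 11 statements merged into one kernel-verified Lean document; each statement's English description precedes it below -/
import Mathlib

section
/- For every natural number a and every real number θ, the accuracy function of the frequent outcome approach satisfies the recursion π_{2a+1}(θ) = π_{2a}(θ) + H_a(θ), where H_a(θ) := binom(2a, a) · ( (1/2)·θ^a·(1−θ)^a − 2·θ^{a+1}·(1−θ)^{a+1} ). -/
open Finset

/-- Prediction weight of the frequent outcome approach. -/
noncomputable def w (k n : ℕ) (θ : ℝ) : ℝ :=
  if 2 * n < k then 1 - θ else if 2 * n = k then 1 / 2 else θ

/-- Accuracy function of the frequent outcome approach. -/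
noncomputable def acc (k : ℕ) (θ : ℝ) : ℝ :=
  ∑ n ∈ Finset.range (k + 1), w k n θ * (k.choose n) * θ ^ n * (1 - θ) ^ (k - n)

/-- The correction term `H_a`. -/
noncomputable def H (a : ℕ) (θ : ℝ) : ℝ :=
  ((2 * a).choose a : ℝ) * ((1 / 2) * θ ^ a * (1 - θ) ^ a - 2 * θ ^ (a + 1) * (1 - θ) ^ (a + 1))

/-- Auxiliary binomial term. -/
noncomputable def fbin (θ : ℝ) (k n : ℕ) : ℝ :=
  (k.choose n : ℝ) * θ ^ n * (1 - θ) ^ (k - n)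

lemma fbin_pascal (θ : ℝ) (a n : ℕ) (hn : n ≤ 2 * a) :
    fbin θ (2 * a + 1) (n + 1) = (1 - θ) * fbin θ (2 * a) (n + 1) + θ * fbin θ (2 * a) n := by
  unfold fbin
  rcases eq_or_lt_of_le hn with h | h
  · subst h
    have h0 : (2 * a).choose (2 * a + 1) = 0 := Nat.choose_eq_zero_of_lt (by omega)
    simp [Nat.choose_succ_succ, h0]
    ring
  · have h1 : 2 * a + 1 - (n + 1) = (2 * a - (n + 1)) + 1 := by omega
    have h2 : 2 * a - n = (2 * a - (n + 1)) + 1 := by omega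
    rw [Nat.choose_succ_succ, h1, h2]
    push_cast
    ring

theorem accuracy_recursion (a : ℕ) (θ : ℝ) :
    acc (2 * a + 1) θ = acc (2 * a) θ + H a θ := by
  set A := ∑ n ∈ Finset.range a, fbin θ (2 * a) n with hA
  set B := fbin θ (2 * a) a with hB
  set C := ∑ n ∈ Finset.range a, fbin θ (2 * a) (a + 1 + n) with hC
  have hacc2a : acc (2 * a) θ = (1 - θ) * A + (1 / 2) * B + θ * C := by
    unfold acc
    have hs : 2 * a + 1 = (a + 1) + a := by omega
    rw [hs, Finset.sum_range_add, Finset.sum_range_succ, hA, hB, hC,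
        Finset.mul_sum, Finset.mul_sum]
    congr 1
    · congr 1
      · apply Finset.sum_congr rfl
        intro n hn
        have hn' : n < a := Finset.mem_range.mp hn
        have hw : w (2 * a) n θ = 1 - θ := by
          unfold w; rw [if_pos (by omega)]
        rw [hw]; unfold fbin; ring
      · have hw : w (2 * a) a θ = 1 / 2 := by
          unfold w; rw [if_neg (by omega), if_pos rfl]
        rw [hw]; unfold fbin; ring
    · apply Finset.sum_congr rfl
      intro n hn
      have hw : w (2 * a) (a + 1 + n) θ = θ := by
        unfold w; rw [if_neg (by omega), if_neg (by omega)]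
      rw [hw]; unfold fbin; ring
  have hS1 : ∑ n ∈ Finset.range (a + 1), fbin θ (2 * a + 1) n
      = (1 - θ) * (A + B) + θ * A := by
    rw [Finset.sum_range_succ']
    have h0 : fbin θ (2 * a + 1) 0 = (1 - θ) * fbin θ (2 * a) 0 := by
      unfold fbin
      simp [pow_succ]
      ring
    have hsum : ∑ i ∈ Finset.range a, fbin θ (2 * a + 1) (i + 1)
        = (1 - θ) * (∑ i ∈ Finset.range a, fbin θ (2 * a) (i + 1)) + θ * A := by
      rw [hA, Finset.mul_sum, Finset.mul_sum, ← Finset.sum_add_distrib]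
      apply Finset.sum_congr rfl
      intro i hi
      exact fbin_pascal θ a i (by have := Finset.mem_range.mp hi; omega)
    have hshift : (∑ i ∈ Finset.range a, fbin θ (2 * a) (i + 1)) + fbin θ (2 * a) 0
        = A + B := by
      rw [hA, hB, ← Finset.sum_range_succ', Finset.sum_range_succ]
    rw [hsum, h0]
    linear_combination (1 - θ) * hshift
  have hS2 : ∑ j ∈ Finset.range (a + 1), fbin θ (2 * a + 1) (a + 1 + j)
      = (1 - θ) * C + θ * (B + C) := by
    have hpt : ∀ j ∈ Finset.range (a + 1),
        fbin θ (2 * a + 1) (a + 1 + j)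
          = (1 - θ) * fbin θ (2 * a) (a + 1 + j) + θ * fbin θ (2 * a) (a + j) := by
      intro j hj
      have hj' : j < a + 1 := Finset.mem_range.mp hj
      have he : a + 1 + j = (a + j) + 1 := by omega
      rw [he]
      exact fbin_pascal θ a (a + j) (by omega)
    rw [Finset.sum_congr rfl hpt, Finset.sum_add_distrib, ← Finset.mul_sum, ← Finset.mul_sum]
    have h1 : ∑ j ∈ Finset.range (a + 1), fbin θ (2 * a) (a + 1 + j) = C := by
      rw [Finset.sum_range_succ, hC]
      have hz : fbin θ (2 * a) (a + 1 + a) = 0 := by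
        unfold fbin
        rw [Nat.choose_eq_zero_of_lt (by omega)]
        simp
      rw [hz, add_zero]
    have h2 : ∑ j ∈ Finset.range (a + 1), fbin θ (2 * a) (a + j) = B + C := by
      rw [Finset.sum_range_succ', hB, hC]
      have : ∀ i ∈ Finset.range a, fbin θ (2 * a) (a + (i + 1)) = fbin θ (2 * a) (a + 1 + i) := by
        intro i hi
        congr 1
        omega
      rw [Finset.sum_congr rfl this]
      simp [add_comm]
    rw [h1, h2]
  have hacc2a1 : acc (2 * a + 1) θ
      = (1 - θ) * (∑ n ∈ Finset.range (a + 1), fbin θ (2 * a + 1) n)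
        + θ * (∑ j ∈ Finset.range (a + 1), fbin θ (2 * a + 1) (a + 1 + j)) := by
    unfold acc
    have hs : 2 * a + 1 + 1 = (a + 1) + (a + 1) := by omega
    rw [hs, Finset.sum_range_add, Finset.mul_sum, Finset.mul_sum]
    congr 1
    · apply Finset.sum_congr rfl
      intro n hn
      have hn' : n < a + 1 := Finset.mem_range.mp hn
      have hw : w (2 * a + 1) n θ = 1 - θ := by
        unfold w; rw [if_pos (by omega)]
      rw [hw]; unfold fbin; ring
    · apply Finset.sum_congr rfl
      intro j hj
      have hw : w (2 * a + 1) (a + 1 + j) θ = θ := by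
        unfold w; rw [if_neg (by omega), if_neg (by omega)]
      rw [hw]; unfold fbin; ring
  rw [hacc2a1, hS1, hS2, hacc2a, hB]
  unfold H fbin
  have hsub : 2 * a - a = a := by omega
  rw [hsub]
  ring
end

section
/- For every natural number a and every real number θ, the accuracy function of the frequent outcome approach satisfies π_{2a+2}(θ) = π_{2a+1}(θ); that is, the accuracy is unchanged in passing from an odd number of observed trials 2a+1 to an even number 2a+2. -/
open Finset

lemma sum_pascal (k : ℕ) (f : ℕ → ℝ) :
    ∑ n ∈ range (k + 2), ((k+1).choose n : ℝ) * f n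
      = ∑ n ∈ range (k + 1), (k.choose n : ℝ) * f n
        + ∑ n ∈ range (k + 1), (k.choose n : ℝ) * f (n + 1) := by
  have h0 : ∑ n ∈ range (k + 2), (k.choose n : ℝ) * f n
      = ∑ n ∈ range (k + 1), (k.choose n : ℝ) * f n := by
    rw [Finset.sum_range_succ]
    simp [Nat.choose_eq_zero_of_lt]
  rw [← h0, Finset.sum_range_succ' (fun n => ((k+1).choose n : ℝ) * f n) (k+1),
      Finset.sum_range_succ' (fun n => (k.choose n : ℝ) * f n) (k+1)]
  simp only [Nat.choose_succ_succ, Nat.choose_zero_right, Nat.cast_add, Nat.cast_one]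
  rw [Finset.sum_congr rfl (fun n _ => by ring :
        ∀ n ∈ range (k+1), ((k.choose n : ℝ) + (k.choose (n+1) : ℝ)) * f (n+1)
          = (k.choose n : ℝ) * f (n+1) + (k.choose (n+1) : ℝ) * f (n+1)),
      Finset.sum_add_distrib]
  ring

theorem accuracy_odd_to_even (a : ℕ) (θ : ℝ) :
    acc (2 * a + 2) θ = acc (2 * a + 1) θ := by
  set D : ℕ → ℝ := fun n =>
    ((2*a+1).choose n : ℝ) * θ^n * (1-θ)^(2*a+1-n) *
      ((1-θ) * w (2*a+2) n θ + θ * w (2*a+2) (n+1) θ - w (2*a+1) n θ) with hD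
  have key : acc (2*a+2) θ - acc (2*a+1) θ = ∑ n ∈ range (2*a+2), D n := by
    have e1 : acc (2*a+2) θ
        = ∑ n ∈ range (2*a+1+2), ((2*a+1+1).choose n : ℝ) *
            (w (2*a+2) n θ * θ^n * (1-θ)^(2*a+2-n)) := by
      unfold acc
      apply Finset.sum_congr (by ring_nf)
      intro n _
      ring_nf
    rw [e1, sum_pascal (2*a+1) (fun n => w (2*a+2) n θ * θ^n * (1-θ)^(2*a+2-n))]
    unfold acc
    rw [show 2*a+1+1 = 2*a+2 from rfl, ← Finset.sum_add_distrib, ← Finset.sum_sub_distrib]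
    apply Finset.sum_congr rfl
    intro n hn
    simp only [mem_range] at hn
    have h1 : 2*a+2-n = (2*a+1-n)+1 := by omega
    have h2 : 2*a+2-(n+1) = 2*a+1-n := by omega
    rw [hD]
    simp only [h1, h2, pow_succ]
    ring
  have hzero : ∀ n ∈ range (2*a+2), n ∉ ({a, a+1} : Finset ℕ) → D n = 0 := by
    intro n hn hns
    simp only [mem_insert, mem_singleton] at hns
    push_neg at hns
    simp only [mem_range] at hn
    rw [hD]
    rcases lt_or_ge n a with h | h
    · have c1 : 2*n < 2*a+2 := by omega
      have c2 : 2*(n+1) < 2*a+2 := by omega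
      have c3 : 2*n < 2*a+1 := by omega
      simp only [w, if_pos c1, if_pos c2, if_pos c3]
      ring
    · have c1 : ¬ 2*n < 2*a+2 := by omega
      have c1' : ¬ 2*n = 2*a+2 := by omega
      have c2 : ¬ 2*(n+1) < 2*a+2 := by omega
      have c2' : ¬ 2*(n+1) = 2*a+2 := by omega
      have c3 : ¬ 2*n < 2*a+1 := by omega
      have c3' : ¬ 2*n = 2*a+1 := by omega
      simp only [w, if_neg c1, if_neg c1', if_neg c2, if_neg c2', if_neg c3, if_neg c3']
      ring
  have hsum : ∑ n ∈ range (2*a+2), D n = D a + D (a+1) := by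
    rw [← Finset.sum_subset (s₁ := ({a, a+1} : Finset ℕ))
        (by intro x hx; simp only [mem_insert, mem_singleton] at hx
            simp only [mem_range]; omega)
        (fun n hn hns => hzero n hn hns)]
    rw [Finset.sum_pair (by omega : a ≠ a + 1)]
  have hDa : D a + D (a+1) = 0 := by
    have hC : ((2*a+1).choose (a+1) : ℝ) = ((2*a+1).choose a : ℝ) := by
      norm_cast
      rw [← Nat.choose_symm (by omega : a+1 ≤ 2*a+1)]
      congr 1
      omega
    have e1 : 2*a+1-a = a+1 := by omega
    have e2 : 2*a+1-(a+1) = a := by omega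
    have ca1 : 2*a < 2*a+2 := by omega
    have ca2 : 2*(a+1) = 2*a+2 := by omega
    have ca2' : ¬ 2*(a+1) < 2*a+2 := by omega
    have ca3 : 2*a < 2*a+1 := by omega
    have cb2 : ¬ 2*(a+1+1) < 2*a+2 := by omega
    have cb2' : ¬ 2*(a+1+1) = 2*a+2 := by omega
    have cb3 : ¬ 2*(a+1) < 2*a+1 := by omega
    have cb3' : ¬ 2*(a+1) = 2*a+1 := by omega
    rw [hD]
    simp only [e1, e2, hC, w, if_pos ca1, if_neg ca2', if_pos ca2, if_pos ca3,
      if_neg cb2, if_neg cb2', if_neg cb3, if_neg cb3', pow_succ]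
    ring
  have : acc (2*a+2) θ - acc (2*a+1) θ = 0 := by rw [key, hsum, hDa]
  linarith
end

section
/- For every real number θ with 0 ≤ θ ≤ 1, the accuracy function of the frequent outcome approach converges to the accuracy of ideal prediction: lim_{k→∞} π_k(θ) = max(θ, 1−θ). -/
open Finset Filter

lemma sum_b (θ : ℝ) (k : ℕ) :
    ∑ n ∈ Finset.range (k+1), (k.choose n : ℝ) * θ^n * (1-θ)^(k-n) = 1 := by
  have h := congrArg (Polynomial.eval θ) (bernsteinPolynomial.sum ℝ k)
  simpa [bernsteinPolynomial, Polynomial.eval_finset_sum] using h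

lemma var_b (θ : ℝ) (k : ℕ) :
    ∑ n ∈ Finset.range (k+1), ((k:ℝ)*θ - n)^2 * ((k.choose n : ℝ) * θ^n * (1-θ)^(k-n))
      = k * θ * (1 - θ) := by
  have h := congrArg (Polynomial.eval θ) (bernsteinPolynomial.variance ℝ k)
  simpa [bernsteinPolynomial, Polynomial.eval_finset_sum, nsmul_eq_mul, mul_assoc] using h

lemma acc_symm (θ : ℝ) (k : ℕ) : acc k (1 - θ) = acc k θ := by
  unfold acc
  rw [← Finset.sum_range_reflect]
  apply Finset.sum_congr rfl
  intro n hn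
  have hnk : n ≤ k := Nat.lt_succ_iff.mp (Finset.mem_range.mp hn)
  have h1 : k + 1 - 1 - n = k - n := by omega
  rw [h1]
  have hw : w k (k - n) (1 - θ) = w k n θ := by
    unfold w
    split_ifs <;> first | ring1 | (exfalso; omega)
  have hc : (k.choose (k - n) : ℝ) = k.choose n := by
    rw [Nat.choose_symm hnk]
  have hs : k - (k - n) = n := Nat.sub_sub_self hnk
  rw [hw, hs, hc]
  ring_nf

lemma key (θ : ℝ) (h0 : 0 ≤ θ) (h1 : θ ≤ 1) (hθ : 1/2 < θ) :
    Tendsto (fun k => acc k θ) atTop (nhds θ) := by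
  set δ : ℝ := θ - 1/2 with hδdef
  have hδ : 0 < δ := by simp only [hδdef]; linarith
  set C : ℝ := 2 * θ * (1 - θ) / δ with hCdef
  clear_value δ
  clear_value C
  have hC : 0 ≤ C := by rw [hCdef]; exact div_nonneg (by nlinarith) hδ.le
  rw [← tendsto_sub_nhds_zero_iff]
  refine squeeze_zero_norm' ?_
    (tendsto_const_div_atTop_nhds_zero_nat C)
  filter_upwards [eventually_ge_atTop 1] with k hk
  have hkpos : (0:ℝ) < k := by exact_mod_cast hk
  set b : ℕ → ℝ := fun n => (k.choose n : ℝ) * θ^n * (1-θ)^(k-n) with hbdef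
  have hbnn : ∀ n, 0 ≤ b n := by
    intro n
    exact mul_nonneg (mul_nonneg (by positivity) (by positivity))
      (pow_nonneg (by linarith) _)
  have hacc : acc k θ = ∑ n ∈ Finset.range (k+1), w k n θ * b n := by
    unfold acc
    exact Finset.sum_congr rfl fun n _ => by simp [hbdef, mul_assoc]
  have hdiff : θ - acc k θ = ∑ n ∈ Finset.range (k+1), (θ - w k n θ) * b n := by
    rw [hacc]
    have h2 : θ = ∑ n ∈ Finset.range (k+1), θ * b n := by
      rw [← Finset.mul_sum, sum_b θ k, mul_one]
    calc θ - ∑ n ∈ Finset.range (k+1), w k n θ * b n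
        = (∑ n ∈ Finset.range (k+1), θ * b n)
          - ∑ n ∈ Finset.range (k+1), w k n θ * b n := by rw [← h2]
      _ = ∑ n ∈ Finset.range (k+1), (θ - w k n θ) * b n := by
          rw [← Finset.sum_sub_distrib]
          exact Finset.sum_congr rfl fun n _ => by ring
  have hwle : ∀ n, w k n θ ≤ θ := by
    intro n; unfold w; split_ifs <;> linarith
  have hnonneg : 0 ≤ θ - acc k θ := by
    rw [hdiff]
    exact Finset.sum_nonneg fun n _ => mul_nonneg (by linarith [hwle n]) (hbnn n)
  have hub : θ - acc k θ ≤ C / k := by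
    rw [hdiff]
    have hterm : ∀ n ∈ Finset.range (k+1),
        (θ - w k n θ) * b n
          ≤ (2*δ / ((k*δ)^2)) * (((k:ℝ)*θ - n)^2 * b n) := by
      intro n hn
      by_cases h : 2 * n < k + 1
      · -- 2n ≤ k
        have hn2 : (n:ℝ) ≤ k / 2 := by
          have : (2*n : ℕ) ≤ k := by omega
          have := (Nat.cast_le (α := ℝ)).mpr this
          push_cast at this; linarith
        have hfar : (k:ℝ)*δ ≤ (k:ℝ)*θ - n := by
          have : (k:ℝ)*δ = k*θ - k/2 := by rw [hδdef]; ring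
          rw [this]; linarith
        have hsq : ((k:ℝ)*δ)^2 ≤ ((k:ℝ)*θ - n)^2 := by
          apply sq_le_sq' <;> nlinarith [mul_pos hkpos hδ]
        have hwge : θ - w k n θ ≤ 2*δ := by
          unfold w; split_ifs <;> linarith
        have hpos : (0:ℝ) < ((k:ℝ)*δ)^2 := pow_pos (mul_pos hkpos hδ) 2
        rw [div_mul_eq_mul_div, le_div_iff₀ hpos]
        have hbn := hbnn n
        nlinarith [mul_le_mul_of_nonneg_right hsq hbn,
          mul_le_mul_of_nonneg_right hwge hbn]
      · -- 2n > k ⇒ w = θ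
        have hw0 : w k n θ = θ := by
          unfold w; rw [if_neg (by omega), if_neg (by omega)]
        rw [hw0, sub_self, zero_mul]
        have h2d : (0:ℝ) ≤ 2*δ / (((k:ℝ)*δ)^2) := div_nonneg (by linarith) (sq_nonneg _)
        exact mul_nonneg h2d (mul_nonneg (sq_nonneg _) (hbnn n))
    calc ∑ n ∈ Finset.range (k+1), (θ - w k n θ) * b n
        ≤ ∑ n ∈ Finset.range (k+1),
            (2*δ / ((k*δ)^2)) * (((k:ℝ)*θ - n)^2 * b n) :=
          Finset.sum_le_sum hterm
      _ = (2*δ / ((k*δ)^2)) * (k * θ * (1 - θ)) := by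
          rw [← Finset.mul_sum, var_b θ k]
      _ = C / k := by
          rw [hCdef]; field_simp
  have : ‖acc k θ - θ‖ = θ - acc k θ := by
    rw [norm_sub_rev, Real.norm_eq_abs, abs_of_nonneg hnonneg]
  rw [this]; exact hub

theorem accuracy_tendsto_ideal (θ : ℝ) (h0 : 0 ≤ θ) (h1 : θ ≤ 1) :
    Tendsto (fun k => acc k θ) atTop (nhds (max θ (1 - θ))) := by
  rcases lt_trichotomy θ (1/2) with h | h | h
  · rw [max_eq_right (by linarith)]
    have := key (1 - θ) (by linarith) (by linarith) (by linarith)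
    simpa [acc_symm θ] using this
  · have hconst : ∀ k, acc k θ = 1/2 := by
      intro k
      have : acc k θ = ∑ n ∈ Finset.range (k+1),
          (1/2) * ((k.choose n : ℝ) * θ^n * (1-θ)^(k-n)) := by
        unfold acc
        refine Finset.sum_congr rfl fun n _ => ?_
        have hw : w k n θ = 1/2 := by
          unfold w; split_ifs <;> norm_num [h]
        rw [hw]; ring
      rw [this, ← Finset.mul_sum, sum_b θ k, mul_one]
    have hmax : max θ (1 - θ) = 1/2 := by rw [h]; norm_num
    rw [hmax]
    simp only [hconst]
    exact tendsto_const_nhds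
  · rw [max_eq_left (by linarith)]
    exact key θ h0 h1 h
end

section
/- For every real number θ with 0 ≤ θ ≤ 1, the partial sums Σ_{i=1}^{a} θ^i·(1−θ)^i·C_{i−1} converge, as a → ∞, to min(θ, 1−θ), where C_n denotes the n-th Catalan number. -/
open Finset Filter

private lemma catalan_cast_succ (n : ℕ) :
    (catalan (n+1) : ℝ) = ∑ i ∈ Finset.range (n+1), (catalan i : ℝ) * (catalan (n-i) : ℝ) := by
  rw [catalan_succ]
  push_cast
  rw [Fin.sum_univ_eq_sum_range (fun i => (catalan i : ℝ) * (catalan (n-i) : ℝ))]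

private lemma catalan_conv_sum (x : ℝ) (N : ℕ) :
    ∑ n ∈ Finset.range N, (catalan (n+1) : ℝ) * x ^ (n+2)
      = ∑ p ∈ (Finset.range N ×ˢ Finset.range N).filter (fun p => p.1 + p.2 < N),
          (catalan p.1 : ℝ) * (catalan p.2 : ℝ) * x ^ (p.1 + p.2 + 2) := by
  have step : ∑ n ∈ Finset.range N, (catalan (n+1) : ℝ) * x ^ (n+2)
      = ∑ n ∈ Finset.range N, ∑ i ∈ Finset.range (n+1),
          (catalan i : ℝ) * (catalan (n-i) : ℝ) * x ^ (n+2) := by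
    refine Finset.sum_congr rfl fun n _ => ?_
    rw [catalan_cast_succ, Finset.sum_mul]
  rw [step, Finset.sum_sigma']
  refine Finset.sum_bij' (fun a _ => (a.2, a.1 - a.2)) (fun p _ => ⟨p.1 + p.2, p.1⟩)
    ?_ ?_ ?_ ?_ ?_
  · rintro ⟨n, i⟩ ha
    simp only [Finset.mem_sigma, Finset.mem_range] at ha
    simp only [Finset.mem_filter, Finset.mem_product, Finset.mem_range]
    omega
  · rintro ⟨i, j⟩ hp
    simp only [Finset.mem_filter, Finset.mem_product, Finset.mem_range] at hp
    simp only [Finset.mem_sigma, Finset.mem_range]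
    omega
  · rintro ⟨n, i⟩ ha
    simp only [Finset.mem_sigma, Finset.mem_range] at ha
    have h' : i + (n - i) = n := by omega
    simp only [h']
  · rintro ⟨i, j⟩ hp
    simp only [Nat.add_sub_cancel_left]
  · rintro ⟨n, i⟩ ha
    simp only [Finset.mem_sigma, Finset.mem_range] at ha
    have h' : i + (n - i) = n := by omega
    simp only [h']

theorem catalan_partial_sums_tendsto_min (θ : ℝ) (h0 : 0 ≤ θ) (h1 : θ ≤ 1) :
    Tendsto (fun a : ℕ => ∑ i ∈ Finset.Icc 1 a, θ ^ i * (1 - θ) ^ i * (catalan (i - 1) : ℝ))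
      atTop (nhds (min θ (1 - θ))) := by
  set x : ℝ := θ * (1 - θ) with hxdef
  set m : ℝ := min θ (1 - θ) with hmdef
  have hm0 : 0 ≤ m := le_min h0 (by linarith)
  have hm2 : m ≤ 1 - m := by
    rcases le_total θ (1 - θ) with h | h
    · rw [hmdef, min_eq_left h]; linarith
    · rw [hmdef, min_eq_right h]; linarith
  have hxm : x = m * (1 - m) := by
    rcases le_total θ (1 - θ) with h | h
    · rw [hmdef, min_eq_left h]
    · rw [hmdef, min_eq_right h]; ring
  have hx0 : 0 ≤ x := by nlinarith
  set T : ℕ → ℝ := fun N => ∑ n ∈ Finset.range N, (catalan n : ℝ) * x ^ (n+1) with hT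
  -- original sums equal T
  have hEq : ∀ a : ℕ,
      (∑ i ∈ Finset.Icc 1 a, θ ^ i * (1 - θ) ^ i * (catalan (i - 1) : ℝ)) = T a := by
    intro a
    rw [hT]
    rw [show Finset.Icc 1 a = Finset.Ico 1 (a+1) by rw [Finset.Ico_add_one_right_eq_Icc]]
    rw [Finset.sum_Ico_eq_sum_range]
    simp only [Nat.add_sub_cancel]
    refine Finset.sum_congr rfl fun n _ => ?_
    have : θ ^ (1+n) * (1 - θ) ^ (1+n) = x ^ (n+1) := by
      rw [hxdef, mul_pow, add_comm]
    rw [this]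
    have : (1 + n) - 1 = n := by omega
    rw [this]; ring
  have hTnn : ∀ N, 0 ≤ T N := by
    intro N
    refine Finset.sum_nonneg fun n _ => ?_
    positivity
  have hmono : Monotone T := by
    intro a b hab
    exact Finset.sum_le_sum_of_subset_of_nonneg (Finset.range_subset_range.2 hab)
      (fun n _ _ => by positivity)
  -- key recursion form
  have hrec : ∀ N, T (N+1) = x + ∑ p ∈ (Finset.range N ×ˢ Finset.range N).filter
      (fun p => p.1 + p.2 < N), (catalan p.1 : ℝ) * (catalan p.2 : ℝ) * x ^ (p.1 + p.2 + 2) := by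
    intro N
    simp only [hT]
    rw [Finset.sum_range_succ']
    simp only [catalan_zero, Nat.cast_one, one_mul, pow_one]
    rw [← catalan_conv_sum x N]
    rw [add_comm]
    congr 1
    norm_num
  have hsq : ∀ N, T N ^ 2 = ∑ p ∈ Finset.range N ×ˢ Finset.range N,
      (catalan p.1 : ℝ) * (catalan p.2 : ℝ) * x ^ (p.1 + p.2 + 2) := by
    intro N
    simp only [hT]
    rw [sq, Finset.sum_mul_sum]
    rw [Finset.sum_product]
    refine Finset.sum_congr rfl fun i _ => Finset.sum_congr rfl fun j _ => ?_
    rw [pow_add, pow_add]; ring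
  have hA : ∀ N, T (N+1) ≤ x + T N ^ 2 := by
    intro N
    rw [hrec, hsq]
    have := Finset.sum_le_sum_of_subset_of_nonneg (Finset.filter_subset
      (fun p : ℕ × ℕ => p.1 + p.2 < N) (Finset.range N ×ˢ Finset.range N))
      (fun p _ _ => by positivity :
        ∀ p ∈ Finset.range N ×ˢ Finset.range N,
          p ∉ Finset.filter (fun p : ℕ × ℕ => p.1 + p.2 < N) (Finset.range N ×ˢ Finset.range N) →
          0 ≤ (catalan p.1 : ℝ) * (catalan p.2 : ℝ) * x ^ (p.1 + p.2 + 2))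
    linarith
  have hB : ∀ N, x + T N ^ 2 ≤ T (2*N+1) := by
    intro N
    rw [hrec, hsq]
    have hsub : Finset.range N ×ˢ Finset.range N ⊆
        Finset.filter (fun p : ℕ × ℕ => p.1 + p.2 < 2*N)
          (Finset.range (2*N) ×ˢ Finset.range (2*N)) := by
      intro p hp
      simp only [Finset.mem_product, Finset.mem_range] at hp
      simp only [Finset.mem_filter, Finset.mem_product, Finset.mem_range]
      omega
    have := Finset.sum_le_sum_of_subset_of_nonneg hsub (fun p _ _ => by positivity :
        ∀ p ∈ Finset.filter (fun p : ℕ × ℕ => p.1 + p.2 < 2*N)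
          (Finset.range (2*N) ×ˢ Finset.range (2*N)),
          p ∉ Finset.range N ×ˢ Finset.range N →
          0 ≤ (catalan p.1 : ℝ) * (catalan p.2 : ℝ) * x ^ (p.1 + p.2 + 2))
    linarith
  have hbound : ∀ N, T N ≤ m := by
    intro N
    induction N with
    | zero => simpa [hT] using hm0
    | succ n ih =>
      have := hA n
      have h2 : T n ^ 2 ≤ m ^ 2 := by nlinarith [hTnn n]
      nlinarith
  have hbdd : BddAbove (Set.range T) := ⟨m, by rintro _ ⟨N, rfl⟩; exact hbound N⟩
  set L : ℝ := ⨆ N, T N with hLdef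
  have htend : Tendsto T atTop (nhds L) := tendsto_atTop_ciSup hmono hbdd
  have hLle : ∀ N, T N ≤ L := fun N => le_ciSup hbdd N
  have hLm : L ≤ m := ciSup_le hbound
  have htend1 : Tendsto (fun N => T (N+1)) atTop (nhds L) :=
    htend.comp (tendsto_add_atTop_nat 1)
  have htend2 : Tendsto (fun N => x + T N ^ 2) atTop (nhds (x + L ^ 2)) := by
    exact Tendsto.add tendsto_const_nhds ((htend.pow 2))
  have hLA : L ≤ x + L ^ 2 := le_of_tendsto_of_tendsto' htend1 htend2 fun N => hA N
  have hLB : x + L ^ 2 ≤ L := by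
    have : ∀ N, x + T N ^ 2 ≤ L := fun N => le_trans (hB N) (hLle _)
    exact le_of_tendsto htend2 (Filter.Eventually.of_forall this)
  have hLeq : x + L ^ 2 = L := le_antisymm hLB hLA
  have hLm' : L = m := by
    have hfac : (L - m) * ((1 - m) - L) = 0 := by nlinarith [hLeq, hxm]
    rcases mul_eq_zero.1 hfac with h | h
    · linarith
    · linarith
  have : Tendsto T atTop (nhds m) := hLm' ▸ htend
  refine Tendsto.congr (fun a => (hEq a).symm) this
end

section
/- For every real number θ with 0 ≤ θ ≤ 1, the sequence a ↦ 2·(a+1)·C_a·θ^{a+1}·(1−θ)^{a+1} converges to 0 as a → ∞, where C_n denotes the n-th Catalan number. -/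
open Filter

lemma cb_sq_le : ∀ n : ℕ, (n + 1) * Nat.centralBinom n ^ 2 ≤ 16 ^ n := by
  intro n
  induction n with
  | zero => simp [Nat.centralBinom]
  | succ n ih =>
    have hrec : (n + 1) * Nat.centralBinom (n + 1) = 2 * (2 * n + 1) * Nat.centralBinom n :=
      Nat.succ_mul_centralBinom_succ n
    have hsq : (n + 1) ^ 2 * Nat.centralBinom (n + 1) ^ 2
        = 4 * (2 * n + 1) ^ 2 * Nat.centralBinom n ^ 2 := by
      calc (n + 1) ^ 2 * Nat.centralBinom (n + 1) ^ 2
          = ((n + 1) * Nat.centralBinom (n + 1)) ^ 2 := by ring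
        _ = (2 * (2 * n + 1) * Nat.centralBinom n) ^ 2 := by rw [hrec]
        _ = 4 * (2 * n + 1) ^ 2 * Nat.centralBinom n ^ 2 := by ring
    have key : (n + 1) ^ 2 * ((n + 2) * Nat.centralBinom (n + 1) ^ 2)
        ≤ (n + 1) ^ 2 * 16 ^ (n + 1) := by
      calc (n + 1) ^ 2 * ((n + 2) * Nat.centralBinom (n + 1) ^ 2)
          = (n + 2) * (4 * (2 * n + 1) ^ 2 * Nat.centralBinom n ^ 2) := by
            rw [← hsq]; ring
        _ = (4 * (2 * n + 1) ^ 2 * (n + 2)) * Nat.centralBinom n ^ 2 := by ring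
        _ ≤ (16 * (n + 1) ^ 2 * (n + 1)) * Nat.centralBinom n ^ 2 := by
            apply Nat.mul_le_mul_right; nlinarith
        _ = 16 * (n + 1) ^ 2 * ((n + 1) * Nat.centralBinom n ^ 2) := by ring
        _ ≤ 16 * (n + 1) ^ 2 * 16 ^ n := by exact Nat.mul_le_mul_left _ ih
        _ = (n + 1) ^ 2 * 16 ^ (n + 1) := by ring
    exact Nat.le_of_mul_le_mul_left key (by positivity)

theorem catalan_tail_term_tendsto_zero (θ : ℝ) (h0 : 0 ≤ θ) (h1 : θ ≤ 1) :
    Tendsto (fun a : ℕ => 2 * ((a : ℝ) + 1) * (catalan a : ℝ) * θ ^ (a + 1) * (1 - θ) ^ (a + 1))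
      atTop (nhds 0) := by
  have h1' : 0 ≤ 1 - θ := by linarith
  have hx : θ * (1 - θ) ≤ 1 / 4 := by nlinarith [sq_nonneg (2 * θ - 1)]
  have hxpos : 0 ≤ θ * (1 - θ) := mul_nonneg h0 h1'
  -- upper bound
  have hub : ∀ a : ℕ, 2 * ((a : ℝ) + 1) * (catalan a : ℝ) * θ ^ (a + 1) * (1 - θ) ^ (a + 1)
      ≤ (1 / 2) / Real.sqrt ((a : ℝ) + 1) := by
    intro a
    have hcb : ((a : ℝ) + 1) * (catalan a : ℝ) = (Nat.centralBinom a : ℝ) := by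
      have := succ_mul_catalan_eq_centralBinom a
      exact_mod_cast congrArg (Nat.cast : ℕ → ℝ) this
    have hcbsqrt : (Nat.centralBinom a : ℝ) * Real.sqrt ((a : ℝ) + 1) ≤ 4 ^ a := by
      have h := cb_sq_le a
      have hR : ((a : ℝ) + 1) * (Nat.centralBinom a : ℝ) ^ 2 ≤ 16 ^ a := by
        exact_mod_cast h
      have := Real.sqrt_le_sqrt hR
      rw [show ((16 : ℝ) ^ a) = (4 ^ a) ^ 2 by
        rw [show (16 : ℝ) = 4 ^ 2 by norm_num, ← pow_mul, mul_comm, pow_mul]] at this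
      rw [Real.sqrt_mul (by positivity), Real.sqrt_sq (by positivity),
        Real.sqrt_sq (by positivity)] at this
      linarith [this]
    have hpow : θ ^ (a + 1) * (1 - θ) ^ (a + 1) ≤ (1 / 4) ^ (a + 1) := by
      rw [← mul_pow]
      exact pow_le_pow_left₀ hxpos hx _
    have hsq : (0 : ℝ) < Real.sqrt ((a : ℝ) + 1) := Real.sqrt_pos.2 (by positivity)
    calc 2 * ((a : ℝ) + 1) * (catalan a : ℝ) * θ ^ (a + 1) * (1 - θ) ^ (a + 1)
        = 2 * (Nat.centralBinom a : ℝ) * (θ ^ (a + 1) * (1 - θ) ^ (a + 1)) := by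
          rw [mul_assoc 2, hcb]; ring
      _ ≤ 2 * (Nat.centralBinom a : ℝ) * (1 / 4) ^ (a + 1) := by
          apply mul_le_mul_of_nonneg_left hpow (by positivity)
      _ = (Nat.centralBinom a : ℝ) / 4 ^ a / 2 := by
          rw [div_pow]; field_simp; ring
      _ ≤ (4 ^ a / Real.sqrt ((a : ℝ) + 1)) / 4 ^ a / 2 := by
          gcongr
          rw [le_div_iff₀ hsq]
          exact hcbsqrt
      _ = (1 / 2) / Real.sqrt ((a : ℝ) + 1) := by
          field_simp
  have hlb : ∀ a : ℕ, 0 ≤ 2 * ((a : ℝ) + 1) * (catalan a : ℝ) * θ ^ (a + 1) * (1 - θ) ^ (a + 1) := by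
    intro a; positivity
  have htend : Tendsto (fun a : ℕ => (1 / 2) / Real.sqrt ((a : ℝ) + 1)) atTop (nhds 0) := by
    have h1 : Tendsto (fun a : ℕ => 1 / ((a : ℝ) + 1)) atTop (nhds 0) :=
      tendsto_one_div_add_atTop_nhds_zero_nat
    have h2 : Tendsto (fun a : ℕ => Real.sqrt (1 / ((a : ℝ) + 1))) atTop (nhds 0) := by
      have h3 := (Real.continuous_sqrt.tendsto 0).comp h1
      rw [Real.sqrt_zero] at h3
      exact h3
    have heq : (fun a : ℕ => (1 / 2) / Real.sqrt ((a : ℝ) + 1))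
        = fun a : ℕ => (1 / 2) * Real.sqrt (1 / ((a : ℝ) + 1)) := by
      funext a
      rw [show (1 : ℝ) / ((a : ℝ) + 1) = ((a : ℝ) + 1)⁻¹ from one_div _, Real.sqrt_inv]
      ring
    rw [heq]
    simpa using h2.const_mul (1 / 2 : ℝ)
  exact squeeze_zero hlb hub htend
end

section
/- For every real number z with 0 ≤ z ≤ 1/4, the Catalan number generating series converges and satisfies Σ_{k=0}^{∞} C_k·z^k = 2 / (1 + √(1 − 4z)), where C_k denotes the k-th Catalan number. -/
open Finset Filter Topology

/-- `(3n+1) · (centralBinom n)² ≤ 16ⁿ`. -/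
lemma cb_sq_bound (n : ℕ) : (3 * n + 1) * Nat.centralBinom n ^ 2 ≤ 16 ^ n := by
  induction n with
  | zero => simp [Nat.centralBinom]
  | succ n ih =>
    have h := Nat.succ_mul_centralBinom_succ n
    have key : (n + 1) ^ 2 * ((3 * (n + 1) + 1) * Nat.centralBinom (n + 1) ^ 2)
        ≤ (n + 1) ^ 2 * 16 ^ (n + 1) := by
      have h2 : ((n + 1) * Nat.centralBinom (n + 1)) ^ 2
          = (2 * (2 * n + 1)) ^ 2 * Nat.centralBinom n ^ 2 := by rw [h]; ring
      calc (n + 1) ^ 2 * ((3 * (n + 1) + 1) * Nat.centralBinom (n + 1) ^ 2)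
          = (3 * n + 4) * ((n + 1) * Nat.centralBinom (n + 1)) ^ 2 := by ring
        _ = ((3 * n + 4) * (2 * (2 * n + 1)) ^ 2) * Nat.centralBinom n ^ 2 := by
            rw [h2]; ring
        _ ≤ (16 * (n + 1) ^ 2) * ((3 * n + 1) * Nat.centralBinom n ^ 2) := by
            rw [← mul_assoc]
            apply Nat.mul_le_mul_right
            nlinarith
        _ ≤ (16 * (n + 1) ^ 2) * 16 ^ n := Nat.mul_le_mul_left _ ih
        _ = (n + 1) ^ 2 * 16 ^ (n + 1) := by ring
    exact Nat.le_of_mul_le_mul_left key (by positivity)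

lemma cb_div_four_pow_tendsto :
    Tendsto (fun n : ℕ => (Nat.centralBinom n : ℝ) / 4 ^ n) atTop (𝓝 0) := by
  have hb : ∀ n : ℕ, (Nat.centralBinom n : ℝ) / 4 ^ n ≤ Real.sqrt (1 / (3 * n + 1)) := by
    intro n
    have h4 : (0:ℝ) < 4 ^ n := by positivity
    have h3 : (0:ℝ) < 3 * n + 1 := by positivity
    rw [← Real.sqrt_sq (by positivity : (0:ℝ) ≤ (Nat.centralBinom n : ℝ) / 4 ^ n)]
    apply Real.sqrt_le_sqrt
    rw [div_pow, div_le_div_iff₀ (by positivity) h3, one_mul]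
    have hcb : ((3 * n + 1) * Nat.centralBinom n ^ 2 : ℝ) ≤ (16 ^ n : ℝ) := by
      exact_mod_cast cb_sq_bound n
    have h16 : ((4:ℝ) ^ n) ^ 2 = 16 ^ n := by
      rw [← pow_mul, mul_comm n 2, pow_mul]; norm_num
    push_cast at hcb
    nlinarith [hcb, h16]
  have hatTop : Tendsto (fun n : ℕ => (3 * (n:ℝ) + 1)) atTop atTop := by
    apply tendsto_atTop_add_const_right
    exact tendsto_natCast_atTop_atTop.const_mul_atTop (by norm_num)
  have hlim : Tendsto (fun n : ℕ => Real.sqrt (1 / (3 * n + 1))) atTop (𝓝 0) := by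
    rw [show (0:ℝ) = Real.sqrt 0 by simp]
    apply (Real.continuous_sqrt.tendsto 0).comp
    simp only [one_div]
    exact tendsto_inv_atTop_zero.comp hatTop
  exact squeeze_zero (fun n => by positivity) hb hlim

lemma catalan_partial_sum_quarter (n : ℕ) :
    ∑ k ∈ range n, (catalan k : ℝ) * (1 / 4 : ℝ) ^ k
      = 2 - 2 * Nat.centralBinom n / 4 ^ n := by
  induction n with
  | zero => simp [Nat.centralBinom]
  | succ n ih =>
    rw [Finset.sum_range_succ, ih]
    have h1 : ((n:ℝ) + 1) * (catalan n : ℝ) = (Nat.centralBinom n : ℝ) := by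
      exact_mod_cast congrArg (Nat.cast : ℕ → ℝ) (succ_mul_catalan_eq_centralBinom n)
    have h2 : ((n:ℝ) + 1) * (Nat.centralBinom (n + 1) : ℝ)
        = 2 * (2 * n + 1) * (Nat.centralBinom n : ℝ) := by
      exact_mod_cast congrArg (Nat.cast : ℕ → ℝ) (Nat.succ_mul_centralBinom_succ n)
    have hn1 : ((n:ℝ) + 1) ≠ 0 := by positivity
    have h4 : ((4:ℝ) ^ n) ≠ 0 := by positivity
    have hc : (catalan n : ℝ) = (Nat.centralBinom n : ℝ) / ((n:ℝ) + 1) := by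
      rw [eq_div_iff hn1]; linarith [h1]
    have hb' : (Nat.centralBinom (n + 1) : ℝ)
        = 2 * (2 * (n:ℝ) + 1) * (Nat.centralBinom n : ℝ) / ((n:ℝ) + 1) := by
      rw [eq_div_iff hn1]; linarith [h2]
    rw [hc, hb', pow_succ]
    rw [div_pow, one_pow]
    field_simp
    ring

lemma catalan_hasSum_quarter :
    HasSum (fun k : ℕ => (catalan k : ℝ) * (1 / 4 : ℝ) ^ k) 2 := by
  rw [hasSum_iff_tendsto_nat_of_nonneg (fun k => by positivity)]
  simp_rw [catalan_partial_sum_quarter]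
  have : Tendsto (fun n : ℕ => 2 * ((Nat.centralBinom n : ℝ) / 4 ^ n)) atTop (𝓝 (2 * 0)) :=
    cb_div_four_pow_tendsto.const_mul 2
  simpa using (tendsto_const_nhds (x := (2:ℝ))).sub (this.congr (fun n => by ring))

lemma catalan_le_four_pow (n : ℕ) : catalan n ≤ 4 ^ n := by
  calc catalan n ≤ Nat.centralBinom n := by
        rw [catalan_eq_centralBinom_div]; exact Nat.div_le_self _ _
    _ ≤ ∑ m ∈ range (2 * n + 1), (2 * n).choose m := by
        apply Finset.single_le_sum (f := fun m => (2 * n).choose m)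
          (fun i _ => Nat.zero_le _)
        simp; omega
    _ = 2 ^ (2 * n) := Nat.sum_range_choose (2 * n)
    _ = 4 ^ n := by rw [pow_mul]; norm_num

theorem catalan_generating_function (z : ℝ) (h0 : 0 ≤ z) (h1 : z ≤ 1 / 4) :
    HasSum (fun k : ℕ => (catalan k : ℝ) * z ^ k) (2 / (1 + Real.sqrt (1 - 4 * z))) := by
  rcases eq_or_lt_of_le h1 with rfl | h1
  · simpa using catalan_hasSum_quarter
  rcases eq_or_lt_of_le h0 with rfl | h0
  · -- z = 0
    have := hasSum_single (f := fun k : ℕ => (catalan k : ℝ) * (0:ℝ) ^ k) 0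
      (fun b hb => by simp [zero_pow hb])
    convert this using 2 <;> norm_num
  -- 0 < z < 1/4 : use the Cauchy product and the quadratic equation
  set f : ℕ → ℝ := fun k => (catalan k : ℝ) * z ^ k with hf_def
  have hf_nonneg : ∀ k, 0 ≤ f k := fun k => by positivity
  have hbound : ∀ k, f k ≤ (4 * z) ^ k := by
    intro k
    have : (catalan k : ℝ) ≤ 4 ^ k := by exact_mod_cast catalan_le_four_pow k
    calc f k ≤ 4 ^ k * z ^ k := by
          apply mul_le_mul_of_nonneg_right this (by positivity)
      _ = (4 * z) ^ k := (mul_pow 4 z k).symm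
  have h4z : 4 * z < 1 := by linarith
  have h4z0 : 0 ≤ 4 * z := by linarith
  have hsum : Summable f :=
    Summable.of_nonneg_of_le hf_nonneg hbound (summable_geometric_of_lt_one h4z0 h4z)
  have hnorm : Summable fun k => ‖f k‖ := by
    simpa [Real.norm_of_nonneg (hf_nonneg _)] using hsum
  set S : ℝ := ∑' k, f k with hS_def
  have hS : HasSum f S := hsum.hasSum
  -- S ≤ 2
  have hSle : S ≤ 2 := by
    have hq : (∑' k, (catalan k : ℝ) * (1 / 4 : ℝ) ^ k) = 2 :=
      catalan_hasSum_quarter.tsum_eq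
    rw [hS_def, ← hq]
    apply Summable.tsum_le_tsum _ hsum catalan_hasSum_quarter.summable
    intro k
    apply mul_le_mul_of_nonneg_left _ (by positivity)
    exact pow_le_pow_left₀ h0.le h1.le k
  -- Cauchy product: z S² = S - 1
  have hcauchy : HasSum (fun n => ∑ k ∈ range (n + 1), f k * f (n - k)) (S * S) := by
    simpa [← hS_def] using hasSum_sum_range_mul_of_summable_norm hnorm hnorm
  have hterm : ∀ n : ℕ, z * ∑ k ∈ range (n + 1), f k * f (n - k)
      = (catalan (n + 1) : ℝ) * z ^ (n + 1) := by
    intro n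
    have : ∑ k ∈ range (n + 1), f k * f (n - k)
        = (∑ k ∈ range (n + 1), (catalan k : ℝ) * (catalan (n - k) : ℝ)) * z ^ n := by
      rw [Finset.sum_mul]
      apply Finset.sum_congr rfl
      intro k hk
      rw [Finset.mem_range] at hk
      have : z ^ k * z ^ (n - k) = z ^ n := by
        rw [← pow_add]; congr 1; omega
      simp only [hf_def]
      calc (catalan k : ℝ) * z ^ k * ((catalan (n - k) : ℝ) * z ^ (n - k))
          = (catalan k : ℝ) * (catalan (n - k) : ℝ) * (z ^ k * z ^ (n - k)) := by ring
        _ = (catalan k : ℝ) * (catalan (n - k) : ℝ) * z ^ n := by rw [this]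
    rw [this]
    have hcat : (catalan (n + 1) : ℝ)
        = ∑ k ∈ range (n + 1), (catalan k : ℝ) * (catalan (n - k) : ℝ) := by
      rw [catalan_succ n]
      push_cast
      rw [Finset.sum_range fun i => (catalan i : ℝ) * (catalan (n - i) : ℝ)]
    rw [← hcat, pow_succ]
    ring
  have hshift : HasSum (fun n => (catalan (n + 1) : ℝ) * z ^ (n + 1)) (z * (S * S)) := by
    have := hcauchy.mul_left z
    exact this.congr_fun fun n => (hterm n).symm
  have hshift' : HasSum (fun n => f (n + 1)) (S - 1) := by
    have := (hasSum_nat_add_iff' (f := f) 1).mpr hS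
    simpa [hf_def] using this
  have hquad : z * (S * S) = S - 1 := hshift.unique hshift'
  -- solve the quadratic
  set s : ℝ := Real.sqrt (1 - 4 * z) with hs_def
  have hs_nonneg : 0 ≤ s := Real.sqrt_nonneg _
  have hs_sq : s ^ 2 = 1 - 4 * z := Real.sq_sqrt (by linarith)
  have hs_pos : 0 < s := Real.sqrt_pos.mpr (by linarith)
  have hfactor : (2 * z * S - 1 - s) * (2 * z * S - 1 + s) = 0 := by
    have : (2 * z * S - 1) ^ 2 = s ^ 2 := by rw [hs_sq]; nlinarith [hquad]
    nlinarith [this]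
  have hroot : 2 * z * S - 1 + s = 0 := by
    rcases mul_eq_zero.mp hfactor with h | h
    · exfalso
      -- then 2zS = 1 + s > 4z·2 ≥ ... contradiction with S ≤ 2
      have : 2 * z * S = 1 + s := by linarith
      nlinarith [hs_pos, hSle, hs_sq]
    · exact h
  have hSval : S = 2 / (1 + s) := by
    have h1s : (0:ℝ) < 1 + s := by linarith
    rw [eq_div_iff (ne_of_gt h1s)]
    nlinarith [hroot, hs_sq]
  rw [← hs_def] at *
  rw [← hSval]
  exact hS
end

section
/- The central binomial coefficients satisfy the Stirling-type asymptotic for Catalan numbers: lim_{a→∞} C_a · √(π·a³) / 4^a = 1, where C_a denotes the a-th Catalan number. -/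
open Filter Real

theorem catalan_stirling_asymptotic :
    Tendsto (fun a : ℕ => (catalan a : ℝ) * Real.sqrt (Real.pi * (a : ℝ) ^ 3) / 4 ^ a)
      atTop (nhds 1) := by
  have hs := Stirling.tendsto_stirlingSeq_sqrt_pi
  have h2 : Tendsto (fun a : ℕ => Stirling.stirlingSeq (2 * a)) atTop (nhds (√π)) :=
    hs.comp (tendsto_atTop_atTop.mpr fun b => ⟨b, fun a ha => by omega⟩)
  have hratio : Tendsto (fun a : ℕ => (a : ℝ) / (a + 1)) atTop (nhds 1) := by
    have := tendsto_natCast_div_add_atTop (𝕜 := ℝ) 1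
    simpa using this
  have hπ : (0 : ℝ) < π := Real.pi_pos
  have key : Tendsto (fun a : ℕ =>
      Stirling.stirlingSeq (2 * a) / (Stirling.stirlingSeq a) ^ 2 * √π * ((a : ℝ) / (a + 1)))
      atTop (nhds 1) := by
    have hne : (√π) ^ 2 ≠ 0 := by positivity
    have hmain := ((h2.div (hs.pow 2) hne).mul (tendsto_const_nhds (x := √π))).mul hratio
    have hval : √π / √π ^ 2 * √π * 1 = (1 : ℝ) := by
      rw [mul_one, sq_sqrt hπ.le]; field_simp; exact sq_sqrt hπ.le
    rw [hval] at hmain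
    exact hmain.congr fun x => by simp [Pi.div_apply]
  refine key.congr' ?_
  filter_upwards [eventually_ge_atTop 1] with a ha
  have ha0 : (0 : ℝ) < a := by exact_mod_cast ha
  have hsa : (0 : ℝ) < Stirling.stirlingSeq a := by
    obtain ⟨b, rfl⟩ := Nat.exists_eq_add_of_le ha
    simpa [add_comm] using Stirling.stirlingSeq'_pos b
  have hfac : (a.factorial : ℝ) = Stirling.stirlingSeq a * (√(2 * a) * ((a : ℝ) / exp 1) ^ a) := by
    rw [Stirling.stirlingSeq]
    have : √(2 * (a : ℝ)) * ((a : ℝ) / exp 1) ^ a ≠ 0 := by positivity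
    field_simp
  have hfac2 : ((2 * a).factorial : ℝ) =
      Stirling.stirlingSeq (2 * a) * (√(2 * (2 * a)) * ((2 * a : ℕ) / exp 1 : ℝ) ^ (2 * a)) := by
    rw [Stirling.stirlingSeq]
    have : √(2 * ((2 * a : ℕ) : ℝ)) * (((2 * a : ℕ) : ℝ) / exp 1) ^ (2 * a) ≠ 0 := by
      have : (0:ℝ) < ((2 * a : ℕ) : ℝ) := by positivity
      positivity
    field_simp
    congr 1; push_cast; ring
  -- Catalan in terms of factorials
  have hnat : a.centralBinom * (a.factorial * a.factorial) = (2 * a).factorial := by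
    have h := Nat.choose_mul_factorial_mul_factorial (show a ≤ 2 * a by omega)
    rw [show 2 * a - a = a from by omega] at h
    rw [Nat.centralBinom, ← h]; ring
  have hcb : (a.centralBinom : ℝ) * ((a.factorial : ℝ) * (a.factorial : ℝ)) = ((2 * a).factorial : ℝ) := by
    exact_mod_cast congrArg (Nat.cast (R := ℝ)) hnat
  have hcat : ((a : ℝ) + 1) * (catalan a : ℝ) = (a.centralBinom : ℝ) := by
    exact_mod_cast congrArg (Nat.cast (R := ℝ)) (succ_mul_catalan_eq_centralBinom a)
  -- sqrt simplifications
  have hsqa : (0 : ℝ) < √a := Real.sqrt_pos.mpr ha0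
  have hsq1 : √(π * (a : ℝ) ^ 3) = √π * ((a : ℝ) * √a) := by
    rw [show (a : ℝ) ^ 3 = (a : ℝ) ^ 2 * a by ring, Real.sqrt_mul hπ.le,
      Real.sqrt_mul (by positivity), Real.sqrt_sq ha0.le]
  have hsq2 : √(2 * (2 * (a : ℝ))) = 2 * √a := by
    rw [show 2 * (2 * (a : ℝ)) = 2 ^ 2 * a by ring, Real.sqrt_mul (by positivity),
      Real.sqrt_sq (by norm_num)]
  have hsq3 : √(2 * (a : ℝ)) = √2 * √a := Real.sqrt_mul (by norm_num) _
  have hs2 : (√2 : ℝ) ^ 2 = 2 := sq_sqrt (by norm_num)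
  -- pow manipulations
  have hpow : (((2 * a : ℕ) : ℝ) / exp 1) ^ (2 * a) = 4 ^ a * (((a : ℝ) / exp 1) ^ a) ^ 2 := by
    push_cast
    rw [show (2 * (a : ℝ)) / exp 1 = 2 * ((a : ℝ) / exp 1) by ring, mul_pow, pow_mul 2,
      pow_mul' _ 2 a]
    norm_num
  have hea : (0 : ℝ) < ((a : ℝ) / exp 1) ^ a := by positivity
  -- combine
  have hfacne : (a.factorial : ℝ) ≠ 0 := by positivity
  have h4 : (0:ℝ) < 4 ^ a := by positivity
  have hcatval : (catalan a : ℝ) = ((2 * a).factorial : ℝ) / (((a : ℝ) + 1) * ((a.factorial : ℝ)) ^ 2) := by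
    rw [← hcb, ← hcat]
    field_simp
  rw [hcatval, hfac2, hfac, hsq1, hsq2, hsq3, hpow]
  field_simp
  ring_nf
  rw [hs2]
end

section
/- Define W_{i,j} := (−1)^j · binom(i,j) · C_{i−1} for integers 0 ≤ j ≤ i with i ≥ 1, and W_{i,j} := 0 otherwise. Then for every natural number t ≥ 1, Σ_{i=1}^{t} W_{i, t−i} equals 1 if t = 1 and equals 0 if t ≥ 2. -/
open Finset

open Polynomial

/-- `cc i = C_{i-1}` for `i ≥ 1`, else `0`. -/
noncomputable def cc (i : ℕ) : ℝ := if 1 ≤ i then (catalan (i - 1) : ℝ) else 0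

lemma cc_zero : cc 0 = 0 := by simp [cc]

lemma cc_rec (i : ℕ) :
    cc i = (if i = 1 then 1 else 0) + ∑ x ∈ antidiagonal i, cc x.1 * cc x.2 := by
  rcases i with _ | _ | n
  · simp [cc]
  · simp [cc, Finset.Nat.antidiagonal_succ, cc_zero]
  · rw [Finset.Nat.sum_antidiagonal_eq_sum_range_succ_mk, Finset.sum_range_succ,
      Finset.sum_range_succ']
    have h0 : cc (n + 2) = (catalan (n + 1) : ℝ) := by simp [cc]
    have h1 : ∀ k, k ∈ Finset.range (n + 1) →
        cc (k + 1) * cc (n + 1 + 1 - (k + 1)) = (catalan k : ℝ) * (catalan (n - k) : ℝ) := by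
      intro k hk
      simp only [Finset.mem_range] at hk
      have e1 : cc (k + 1) = (catalan k : ℝ) := by simp [cc]
      have e2 : n + 1 + 1 - (k + 1) = (n - k) + 1 := by omega
      have e3 : cc ((n - k) + 1) = (catalan (n - k) : ℝ) := by simp [cc]
      rw [e1, e2, e3]
    rw [Finset.sum_congr rfl h1, h0, catalan_succ']
    rw [Finset.Nat.sum_antidiagonal_eq_sum_range_succ_mk]
    push_cast
    simp [cc_zero]

lemma coeff_one_sub_X_pow (m t : ℕ) :
    (((1 : ℝ[X]) - X) ^ m).coeff t = (-1) ^ t * (m.choose t : ℝ) := by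
  induction m generalizing t with
  | zero =>
    cases t <;> simp [Polynomial.coeff_one]
  | succ m ih =>
    have h : ((1 : ℝ[X]) - X) ^ (m + 1) = ((1 : ℝ[X]) - X) ^ m - ((1 : ℝ[X]) - X) ^ m * X := by
      ring
    rw [h, coeff_sub]
    cases t with
    | zero => simp [ih]
    | succ t =>
      rw [Polynomial.coeff_mul_X, ih, ih, Nat.choose_succ_succ']
      push_cast
      ring

noncomputable def Y : ℝ[X] := X - X ^ 2

lemma coeff_Y_pow (m t : ℕ) :
    (Y ^ m).coeff t = if m ≤ t then (-1) ^ (t - m) * (m.choose (t - m) : ℝ) else 0 := by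
  have h : Y = ((1 : ℝ[X]) - X) * X := by rw [Y]; ring
  rw [h, mul_pow, Polynomial.coeff_mul_X_pow']
  split
  · rw [coeff_one_sub_X_pow]
  · rfl

/-- `S t` is the antidiagonal sum of the `W` coefficients. -/
noncomputable def S (t : ℕ) : ℝ :=
  ∑ i ∈ Finset.range (t + 1), (-1) ^ (t - i) * (i.choose (t - i) : ℝ) * cc i

noncomputable def P (N : ℕ) : ℝ[X] := ∑ i ∈ Finset.range (N + 1), C (cc i) * Y ^ i

lemma coeff_P (N t : ℕ) (h : t ≤ N) : (P N).coeff t = S t := by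
  rw [P, Polynomial.finset_sum_coeff]
  simp only [Polynomial.coeff_C_mul, coeff_Y_pow]
  rw [S, ← Finset.sum_subset (Finset.range_subset_range.2 (by omega) : Finset.range (t + 1) ⊆
      Finset.range (N + 1))]
  · refine Finset.sum_congr rfl fun i hi => ?_
    simp only [Finset.mem_range] at hi
    rw [if_pos (by omega)]
    ring
  · intro i hi hni
    simp only [Finset.mem_range] at hi hni
    rw [if_neg (by omega), mul_zero]

lemma coeff_P_sq (t : ℕ) :
    (P t ^ 2).coeff t = ∑ x ∈ antidiagonal t, S x.1 * S x.2 := by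
  rw [sq, Polynomial.coeff_mul]
  refine Finset.sum_congr rfl fun x hx => ?_
  rw [coeff_P _ _ (Finset.HasAntidiagonal.antidiagonal.fst_le hx), coeff_P _ _ (Finset.HasAntidiagonal.antidiagonal.snd_le hx)]

lemma key_s9 (t : ℕ) (ht : 1 ≤ t) :
    (P t).coeff t = Y.coeff t + (P t ^ 2).coeff t := by
  -- expand P t ^ 2 as a double sum
  have hsq : (P t ^ 2).coeff t =
      ∑ a ∈ Finset.range (t + 1), ∑ b ∈ Finset.range (t + 1),
        cc a * cc b * (Y ^ (a + b)).coeff t := by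
    rw [sq, P, Finset.sum_mul_sum]
    rw [Polynomial.finset_sum_coeff]
    refine Finset.sum_congr rfl fun a _ => ?_
    rw [Polynomial.finset_sum_coeff]
    refine Finset.sum_congr rfl fun b _ => ?_
    have : C (cc a) * Y ^ a * (C (cc b) * Y ^ b) = C (cc a * cc b) * Y ^ (a + b) := by
      rw [C_mul, pow_add]; ring
    rw [this, Polynomial.coeff_C_mul]
  -- the double sum equals the sum over the filtered product
  have hfilter : ∑ a ∈ Finset.range (t + 1), ∑ b ∈ Finset.range (t + 1),
        cc a * cc b * (Y ^ (a + b)).coeff t =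
      ∑ x ∈ (Finset.range (t + 1) ×ˢ Finset.range (t + 1)).filter (fun x => x.1 + x.2 ≤ t),
        cc x.1 * cc x.2 * (Y ^ (x.1 + x.2)).coeff t := by
    rw [← Finset.sum_product']
    refine (Finset.sum_subset (Finset.filter_subset _ _) ?_).symm
    intro x _ hx
    simp only [Finset.mem_filter, not_and, not_le] at hx
    have hxt : ¬ (x.1 + x.2 ≤ t) := by
      intro hle
      have h1 : x.1 ∈ Finset.range (t + 1) := Finset.mem_range.2 (by omega)
      have h2 : x.2 ∈ Finset.range (t + 1) := Finset.mem_range.2 (by omega)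
      exact absurd hle (by simpa using hx (Finset.mem_product.2 ⟨h1, h2⟩))
    rw [coeff_Y_pow, if_neg hxt, mul_zero]
  -- the biUnion of antidiagonals equals the filtered product
  have hbU : ((Finset.range (t + 1)).biUnion (fun i => antidiagonal i)) =
      (Finset.range (t + 1) ×ˢ Finset.range (t + 1)).filter (fun x => x.1 + x.2 ≤ t) := by
    ext x
    simp only [Finset.mem_biUnion, Finset.mem_range, Finset.HasAntidiagonal.mem_antidiagonal,
      Finset.mem_filter, Finset.mem_product]
    constructor
    · rintro ⟨i, hi, h⟩; omega
    · intro h; exact ⟨x.1 + x.2, by omega, rfl⟩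

  have hdisj : (↑(Finset.range (t + 1)) : Set ℕ).PairwiseDisjoint
      (fun i => (antidiagonal i : Finset (ℕ × ℕ))) := by
    intro i _ j _ hij
    simp only [Function.onFun]
    rw [Finset.disjoint_left]
    intro x hx hx'
    rw [Finset.HasAntidiagonal.mem_antidiagonal] at hx hx'
    exact hij (hx ▸ hx')
  -- expand P t
  have hP : (P t).coeff t = ∑ i ∈ Finset.range (t + 1), cc i * (Y ^ i).coeff t := by
    rw [P, Polynomial.finset_sum_coeff]
    simp only [Polynomial.coeff_C_mul]
  have hcc : ∀ i ∈ Finset.range (t + 1), cc i * (Y ^ i).coeff t =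
      (if i = 1 then Y.coeff t else 0) +
        (∑ x ∈ antidiagonal i, cc x.1 * cc x.2) * (Y ^ i).coeff t := by
    intro i _
    rw [cc_rec i, add_mul]
    congr 1
    split_ifs with h
    · subst h; rw [one_mul, pow_one]
    · rw [zero_mul]
  rw [hP, Finset.sum_congr rfl hcc, Finset.sum_add_distrib, Finset.sum_ite_eq' (Finset.range (t + 1)) 1
    (fun _ => Y.coeff t), if_pos (Finset.mem_range.2 (by omega))]
  congr 1
  rw [hsq, hfilter, ← hbU, Finset.sum_biUnion hdisj]
  refine Finset.sum_congr rfl fun i _ => ?_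
  rw [Finset.sum_mul]
  refine Finset.sum_congr rfl fun x hx => ?_
  rw [Finset.HasAntidiagonal.mem_antidiagonal] at hx
  rw [hx]

lemma S_rec (t : ℕ) (ht : 1 ≤ t) :
    S t = ((if t = 1 then 1 else 0) - (if t = 2 then 1 else 0))
        + ∑ x ∈ antidiagonal t, S x.1 * S x.2 := by
  have h := key_s9 t ht
  rw [coeff_P t t le_rfl, coeff_P_sq] at h
  have hY : Y.coeff t = (if t = 1 then (1 : ℝ) else 0) - (if t = 2 then 1 else 0) := by
    rw [Y, Polynomial.coeff_sub, Polynomial.coeff_X, Polynomial.coeff_X_pow]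
    split_ifs <;> first | omega | norm_num
  rw [h, hY]

lemma S_zero : S 0 = 0 := by simp [S, cc_zero]

lemma S_one : S 1 = 1 := by
  have : S 1 = (-1 : ℝ) ^ (1 - 0) * ((0 : ℕ).choose (1 - 0) : ℝ) * cc 0 +
      (-1 : ℝ) ^ (1 - 1) * ((1 : ℕ).choose (1 - 1) : ℝ) * cc 1 := by
    rw [S]; rw [Finset.sum_range_succ, Finset.sum_range_succ, Finset.sum_range_zero, zero_add]
  rw [this, cc_zero]
  norm_num [cc]

lemma S_val (t : ℕ) (ht : 1 ≤ t) : S t = if t = 1 then 1 else 0 := by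
  induction t using Nat.strong_induction_on with
  | _ t ih =>
    rcases Nat.lt_or_ge t 3 with h3 | h3
    · interval_cases t
      · rw [S_one]; norm_num
      · -- t = 2
        rw [S_rec 2 (by norm_num)]
        have ha : antidiagonal 2 = {(0, 2), (1, 1), (2, 0)} := by decide
        rw [ha, Finset.sum_insert (by decide), Finset.sum_insert (by decide),
          Finset.sum_singleton]
        norm_num [S_zero, S_one]
    · have hz : ∑ x ∈ antidiagonal t, S x.1 * S x.2 = 0 := by
        rw [Finset.Nat.sum_antidiagonal_eq_sum_range_succ_mk]
        refine Finset.sum_eq_zero ?_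
        intro k hk
        rw [Finset.mem_range] at hk
        rcases Nat.eq_zero_or_pos k with hk0 | hk1
        · rw [hk0, S_zero, zero_mul]
        rcases Nat.lt_or_ge k t with hkt | hkt
        · rcases Nat.eq_or_lt_of_le hk1 with hk1' | hk2
          · have h2 : 1 ≤ t - k := by omega
            rw [ih (t - k) (by omega) h2, if_neg (show ¬ t - k = 1 by omega), mul_zero]
          · rw [ih k hkt hk1, if_neg (show ¬ k = 1 by omega), zero_mul]
        · have h0 : t - k = 0 := by omega
          rw [h0, S_zero, mul_zero]
      rw [S_rec t ht, hz, if_neg (show ¬ t = 1 by omega), if_neg (show ¬ t = 2 by omega)]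
      norm_num

/-- The coefficients `W_{i,j}`. -/
noncomputable def W (i j : ℕ) : ℝ :=
  if 1 ≤ i ∧ j ≤ i then (-1 : ℝ) ^ j * (i.choose j : ℝ) * (catalan (i - 1) : ℝ) else 0

theorem W_antidiagonal_sum (t : ℕ) (ht : 1 ≤ t) :
    ∑ i ∈ Finset.Icc 1 t, W i (t - i) = if t = 1 then 1 else 0 := by

  rw [← S_val t ht, S]
  have hins : Finset.range (t + 1) = insert 0 (Finset.Icc 1 t) := by
    ext x
    simp only [Finset.mem_range, Finset.mem_insert, Finset.mem_Icc]
    omega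
  rw [hins, Finset.sum_insert (by simp)]
  rw [cc_zero, mul_zero, zero_add]
  refine (Finset.sum_congr rfl fun i hi => ?_).symm
  rw [Finset.mem_Icc] at hi
  rw [W, cc, if_pos hi.1]
  rcases Nat.lt_or_ge i (t - i) with hlt | hge
  · rw [if_neg (by omega), Nat.choose_eq_zero_of_lt hlt]
    push_cast
    ring
  · rw [if_pos ⟨hi.1, hge⟩]
end

section
/- For every natural number a and every real number θ, the accuracy function of the frequent outcome approach has the expanded polynomial form π_{2a+1}(θ) = 1 − θ − Σ_{t=1}^{a+2} α_{a,t}·θ^{a+t}, where α_{a,t} := Σ_{i=1}^{a} W_{i, a+t−i} + 2·(a+1)·W_{a+1, t−1} − [a = 0 and t = 1], with W_{i,j} := (−1)^j · binom(i,j) · C_{i−1} for 0 ≤ j ≤ i and W_{i,j} := 0 otherwise, and where [·] denotes the indicator (equal to 1 when the condition holds and 0 otherwise). -/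
open Finset

/-- The coefficients `α_{a,t}` of the expanded polynomial form. -/
noncomputable def α (a t : ℕ) : ℝ :=
  (∑ i ∈ Finset.Icc 1 a, W i (a + t - i)) + 2 * ((a : ℝ) + 1) * W (a + 1) (t - 1)
    - (if a = 0 ∧ t = 1 then 1 else 0)

/-- Tail sum of the binomial distribution. -/
noncomputable def U (K m : ℕ) (θ : ℝ) : ℝ :=
  ∑ n ∈ Finset.Icc m K, (K.choose n : ℝ) * θ ^ n * (1 - θ) ^ (K - n)

/-- The partial sum of the Catalan generating function at `θ(1-θ)`. -/
noncomputable def G (a : ℕ) (θ : ℝ) : ℝ :=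
  ∑ i ∈ Finset.Icc 1 a, (catalan (i - 1) : ℝ) * (θ * (1 - θ)) ^ i

/-- The tail sum with `θ^(a+1)` factored out. -/
noncomputable def V (a : ℕ) (θ : ℝ) : ℝ :=
  ∑ n ∈ Finset.Icc (a + 1) (2 * a + 1),
    ((2 * a + 1).choose n : ℝ) * θ ^ (n - (a + 1)) * (1 - θ) ^ (2 * a + 1 - n)

lemma U_rec (K m : ℕ) (hm : m ≤ K) (θ : ℝ) :
    U (K + 1) (m + 1) θ = θ * U K m θ + (1 - θ) * U K (m + 1) θ := by
  have hre : ∀ (J j : ℕ), U J j θ = ∑ r ∈ Finset.range (J + 1 - j),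
      ((J.choose (j + r) : ℝ)) * θ ^ (j + r) * (1 - θ) ^ (J - (j + r)) := by
    intro J j
    unfold U
    rw [← Finset.Ico_add_one_right_eq_Icc, Finset.sum_Ico_eq_sum_range]
  rw [hre (K+1) (m+1), hre K m, hre K (m+1), show K + 1 + 1 - (m + 1) = K + 1 - m by omega]
  have step1 : ∑ r ∈ Finset.range (K + 1 - m),
      (((K+1).choose (m+1+r) : ℝ)) * θ ^ (m+1+r) * (1 - θ) ^ (K+1 - (m+1+r))
      = (∑ r ∈ Finset.range (K + 1 - m),
          ((K.choose (m+r) : ℝ)) * θ ^ (m+1+r) * (1 - θ) ^ (K+1 - (m+1+r)))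
      + ∑ r ∈ Finset.range (K + 1 - m),
          ((K.choose (m+1+r) : ℝ)) * θ ^ (m+1+r) * (1 - θ) ^ (K+1 - (m+1+r)) := by
    rw [← Finset.sum_add_distrib]
    apply Finset.sum_congr rfl
    intro r _
    have hch : ((K+1).choose (m+1+r) : ℝ) = (K.choose (m+r) : ℝ) + (K.choose (m+1+r) : ℝ) := by
      have h := Nat.choose_succ_succ K (m+r)
      rw [show m+1+r = m+r+1 by omega]
      exact_mod_cast h
    rw [hch]; ring
  rw [step1]
  congr 1
  · rw [Finset.mul_sum]
    apply Finset.sum_congr rfl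
    intro r _
    rw [show K + 1 - (m+1+r) = K - (m+r) by omega, show m+1+r = (m+r)+1 by omega, pow_succ]
    ring
  · rw [show K + 1 - m = (K - m) + 1 by omega, Finset.sum_range_succ]
    have hz : K.choose (m+1+(K-m)) = 0 := by
      rw [show m+1+(K-m) = K+1 by omega]
      exact Nat.choose_succ_self K
    rw [hz, show K + 1 - (m+1) = K - m by omega, Finset.mul_sum]
    push_cast
    simp only [zero_mul, add_zero]
    apply Finset.sum_congr rfl
    intro r hr
    have hrlt : r < K - m := Finset.mem_range.mp hr
    rw [show K + 1 - (m+1+r) = (K - (m+1+r)) + 1 by omega, pow_succ]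
    ring

lemma U_bot (K m : ℕ) (hm : m ≤ K) (θ : ℝ) :
    U K m θ = (K.choose m : ℝ) * θ ^ m * (1 - θ) ^ (K - m) + U K (m + 1) θ := by
  unfold U
  rw [Finset.Icc_add_one_left_eq_Ioc]
  exact (Finset.add_sum_Ioc_eq_sum_Icc
    (f := fun n => (K.choose n : ℝ) * θ ^ n * (1 - θ) ^ (K - n)) hm).symm

lemma binom_total (K : ℕ) (θ : ℝ) :
    ∑ n ∈ Finset.range (K + 1), (K.choose n : ℝ) * θ ^ n * (1 - θ) ^ (K - n) = 1 := by
  calc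
    ∑ n ∈ Finset.range (K + 1), (K.choose n : ℝ) * θ ^ n * (1 - θ) ^ (K - n)
        = ∑ n ∈ Finset.range (K + 1), θ ^ n * (1 - θ) ^ (K - n) * (K.choose n : ℝ) := by
          apply Finset.sum_congr rfl; intro n _; ring
    _ = (θ + (1 - θ)) ^ K := (add_pow θ (1 - θ) K).symm
    _ = 1 := by norm_num

lemma acc_tail (a : ℕ) (θ : ℝ) :
    acc (2 * a + 1) θ = 1 - θ + (2 * θ - 1) * U (2 * a + 1) (a + 1) θ := by
  unfold acc
  have hsplit : ∀ f : ℕ → ℝ, ∑ n ∈ Finset.range (2*a+1+1), f n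
      = ∑ n ∈ Finset.range (a+1), f n + ∑ n ∈ Finset.Icc (a+1) (2*a+1), f n := by
    intro f
    rw [Finset.range_eq_Ico,
      ← Finset.sum_Ico_consecutive f (Nat.zero_le (a+1)) (by omega : a+1 ≤ 2*a+1+1),
      Nat.Ico_zero_eq_range, Finset.Ico_add_one_right_eq_Icc]
  rw [hsplit]
  have e1 : ∑ n ∈ Finset.range (a+1),
        w (2*a+1) n θ * ((2*a+1).choose n : ℝ) * θ^n * (1-θ)^(2*a+1-n)
      = (1-θ) * ∑ n ∈ Finset.range (a+1), ((2*a+1).choose n : ℝ) * θ^n * (1-θ)^(2*a+1-n) := by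
    rw [Finset.mul_sum]
    apply Finset.sum_congr rfl
    intro n hn
    simp only [Finset.mem_range] at hn
    rw [show w (2*a+1) n θ = 1 - θ from if_pos (by omega)]
    ring
  have e2 : ∑ n ∈ Finset.Icc (a+1) (2*a+1),
        w (2*a+1) n θ * ((2*a+1).choose n:ℝ) * θ^n * (1-θ)^(2*a+1-n)
      = θ * U (2*a+1) (a+1) θ := by
    unfold U
    rw [Finset.mul_sum]
    apply Finset.sum_congr rfl
    intro n hn
    simp only [Finset.mem_Icc] at hn
    have hw : w (2*a+1) n θ = θ := by
      unfold w
      rw [if_neg (by omega), if_neg (by omega)]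
    rw [hw]; ring
  have e3 : ∑ n ∈ Finset.range (a+1), ((2*a+1).choose n:ℝ) * θ^n * (1-θ)^(2*a+1-n)
      = 1 - U (2*a+1) (a+1) θ := by
    have hb := binom_total (2*a+1) θ
    rw [hsplit] at hb
    unfold U
    linarith [hb]
  rw [e1, e2, e3]
  ring

lemma cat_rec (a : ℕ) : (a + 2) * catalan (a + 1) = 2 * (2 * a + 1) * catalan a := by
  have h1 := succ_mul_catalan_eq_centralBinom (a + 1)
  have h2 := Nat.succ_mul_centralBinom_succ a
  have h3 := succ_mul_catalan_eq_centralBinom a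
  apply Nat.eq_of_mul_eq_mul_left (Nat.succ_pos a)
  calc (a + 1) * ((a + 2) * catalan (a + 1)) = (a + 1) * ((a + 1 + 1) * catalan (a + 1)) := by ring_nf
    _ = (a + 1) * (a + 1).centralBinom := by rw [h1]
    _ = 2 * (2 * a + 1) * a.centralBinom := h2
    _ = 2 * (2 * a + 1) * ((a + 1) * catalan a) := by rw [h3]
    _ = (a + 1) * (2 * (2 * a + 1) * catalan a) := by ring

lemma choose_21 (a : ℕ) : (2 * a + 1).choose a = (2 * a + 1) * catalan a := by
  have hsym : (2 * a + 1).choose (a + 1) = (2 * a + 1).choose a := by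
    have := Nat.choose_symm (show a ≤ 2 * a + 1 by omega)
    rwa [show 2 * a + 1 - a = a + 1 by omega] at this
  have hkey : 2 * ((2 * a + 1).choose a) = (a + 1).centralBinom := by
    rw [Nat.centralBinom, show 2 * (a + 1) = (2 * a + 1) + 1 by omega,
      Nat.choose_succ_succ, hsym]
    omega
  apply Nat.eq_of_mul_eq_mul_left (show 0 < 2 by norm_num)
  rw [hkey, ← succ_mul_catalan_eq_centralBinom (a + 1),
    show a + 1 + 1 = a + 2 from rfl, cat_rec a]
  ring

lemma T_rec (a : ℕ) (θ : ℝ) :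
    U (2 * a + 3) (a + 2) θ = U (2 * a + 1) (a + 1) θ
      + (2 * θ - 1) * ((2 * a + 1).choose a : ℝ) * (θ * (1 - θ)) ^ (a + 1) := by
  have h1 := U_rec (2*a+2) (a+1) (by omega) θ
  have h2 := U_rec (2*a+1) a (by omega) θ
  have h3 := U_rec (2*a+1) (a+1) (by omega) θ
  have h4 := U_bot (2*a+1) a (by omega) θ
  have h5 := U_bot (2*a+1) (a+1) (by omega) θ
  rw [show 2*a+1-a = a+1 by omega] at h4
  rw [show 2*a+1-(a+1) = a by omega] at h5
  have hsym : ((2*a+1).choose (a+1) : ℝ) = ((2*a+1).choose a : ℝ) := by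
    have h := Nat.choose_symm (show a ≤ 2*a+1 by omega)
    rw [show 2*a+1-a = a+1 by omega] at h
    exact_mod_cast h
  rw [hsym] at h5
  rw [show 2*a+3 = 2*a+2+1 by omega, show a+2 = a+1+1 from rfl, h1,
    show 2*a+2 = 2*a+1+1 by omega, h2, h3, h4, h5, mul_pow]
  ring

lemma main1 (a : ℕ) (θ : ℝ) :
    acc (2 * a + 1) θ = 1 - G a θ - 2 * ((a : ℝ) + 1) * (catalan a : ℝ) * (θ * (1 - θ)) ^ (a + 1) := by
  induction a with
  | zero =>
      rw [acc_tail]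
      norm_num [U, G, Finset.Icc_self]
      ring
  | succ a ih =>
      have hacc := acc_tail (a+1) θ
      rw [show 2*(a+1)+1 = 2*a+3 by ring, show a+1+1 = a+2 from rfl, T_rec] at hacc
      have hGs : G (a+1) θ = G a θ + (catalan a : ℝ) * (θ*(1-θ))^(a+1) := by
        unfold G
        rw [Finset.sum_Icc_succ_top (by omega : 1 ≤ a+1)]
        norm_num
      have hU : (2*θ-1) * U (2*a+1) (a+1) θ
          = θ - G a θ - 2*((a:ℝ)+1)*(catalan a : ℝ)*(θ*(1-θ))^(a+1) := by
        have h := acc_tail a θ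
        linarith [ih]
      have hc1 : (((2*a+1).choose a : ℕ) : ℝ) = (2*(a:ℝ)+1) * (catalan a : ℝ) := by
        exact_mod_cast congrArg (Nat.cast : ℕ → ℝ) (choose_21 a)
      have hc2 : ((a:ℝ)+2) * (catalan (a+1) : ℝ) = 2*(2*(a:ℝ)+1)*(catalan a : ℝ) := by
        exact_mod_cast congrArg (Nat.cast : ℕ → ℝ) (cat_rec a)
      rw [show (2*(a+1)+1) = 2*a+3 by ring] at *
      rw [hacc, hGs]
      push_cast
      linear_combination hU + ((2*θ-1)^2*(θ*(1-θ))^(a+1))*hc1 + (2*(θ*(1-θ))^(a+2))*hc2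

lemma U_factor (a : ℕ) (θ : ℝ) : U (2 * a + 1) (a + 1) θ = θ ^ (a + 1) * V a θ := by
  unfold U V
  rw [Finset.mul_sum]
  apply Finset.sum_congr rfl
  intro n hn
  simp only [Finset.mem_Icc] at hn
  have hp : θ^n = θ^(a+1) * θ^(n-(a+1)) := by
    rw [← pow_add]
    congr 1
    omega
  rw [hp]; ring

/-- Polynomial version of `G`. -/
noncomputable def Pp (a : ℕ) : Polynomial ℝ :=
  ∑ i ∈ Finset.Icc 1 a,
    Polynomial.C ((catalan (i - 1) : ℝ)) * (Polynomial.X * (1 - Polynomial.X)) ^ i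

/-- Polynomial version of `V`. -/
noncomputable def Vp (a : ℕ) : Polynomial ℝ :=
  ∑ n ∈ Finset.Icc (a + 1) (2 * a + 1),
    Polynomial.C (((2 * a + 1).choose n : ℝ)) * Polynomial.X ^ (n - (a + 1))
      * (1 - Polynomial.X) ^ (2 * a + 1 - n)

noncomputable def Qp (a : ℕ) : Polynomial ℝ :=
  (1 - 2 * Polynomial.X) * Vp a
    - Polynomial.C (2 * ((a : ℝ) + 1) * (catalan a : ℝ)) * (1 - Polynomial.X) ^ (a + 1)

lemma Pp_eval (a : ℕ) (θ : ℝ) : (Pp a).eval θ = G a θ := by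
  simp [Pp, G, Polynomial.eval_finset_sum]

lemma Vp_eval (a : ℕ) (θ : ℝ) : (Vp a).eval θ = V a θ := by
  simp [Vp, V, Polynomial.eval_finset_sum]

lemma Pp_fact (a : ℕ) :
    Pp a = Polynomial.X + Polynomial.X ^ (a + 1) * Qp a := by
  apply Polynomial.funext
  intro θ
  rw [Polynomial.eval_add, Polynomial.eval_mul, Polynomial.eval_pow, Polynomial.eval_X, Pp_eval]
  have hq : (Qp a).eval θ
      = (1 - 2*θ) * V a θ - 2*((a:ℝ)+1)*(catalan a : ℝ)*(1-θ)^(a+1) := by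
    simp only [Qp, Polynomial.eval_sub, Polynomial.eval_mul, Polynomial.eval_pow,
      Polynomial.eval_one, Polynomial.eval_X, Polynomial.eval_C, Polynomial.eval_ofNat, Vp_eval]
  rw [hq]
  have hm := main1 a θ
  rw [mul_pow] at hm
  linear_combination hm - acc_tail a θ - (2*θ-1)*(U_factor a θ)

lemma coeff_one_sub_X_pow_s10 (i j : ℕ) :
    ((1 - Polynomial.X : Polynomial ℝ) ^ i).coeff j = (-1 : ℝ) ^ j * (i.choose j : ℝ) := by
  have h : (1 - Polynomial.X : Polynomial ℝ)^i
      = ∑ k ∈ Finset.range (i+1),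
          Polynomial.C ((-1:ℝ)^k * (i.choose k : ℝ)) * Polynomial.X^k := by
    rw [sub_eq_add_neg, add_comm, add_pow]
    apply Finset.sum_congr rfl
    intro k _
    rw [one_pow, mul_one, neg_pow, map_mul, map_pow, map_neg, map_one, Polynomial.C_eq_natCast]
    ring
  rw [h, Polynomial.finset_sum_coeff]
  simp only [Polynomial.coeff_C_mul, Polynomial.coeff_X_pow, mul_ite, mul_one, mul_zero]
  rw [Finset.sum_ite_eq]
  by_cases hj : j ≤ i
  · rw [if_pos (Finset.mem_range.mpr (by omega))]
  · rw [if_neg (fun hc => hj (by simpa using Nat.lt_succ_iff.mp (Finset.mem_range.mp hc))),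
      Nat.choose_eq_zero_of_lt (by omega)]
    simp

lemma coeff_XX_pow (i e : ℕ) :
    ((Polynomial.X * (1 - Polynomial.X) : Polynomial ℝ) ^ i).coeff e
      = if i ≤ e then (-1 : ℝ) ^ (e - i) * (i.choose (e - i) : ℝ) else 0 := by
  rw [mul_pow, Polynomial.coeff_X_pow_mul', coeff_one_sub_X_pow_s10]

lemma Pp_coeff (a e : ℕ) :
    (Pp a).coeff e = ∑ i ∈ Finset.Icc 1 a,
      (catalan (i - 1) : ℝ) *
        (if i ≤ e then (-1 : ℝ) ^ (e - i) * (i.choose (e - i) : ℝ) else 0) := by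
  simp only [Pp, Polynomial.finset_sum_coeff, Polynomial.coeff_C_mul, coeff_XX_pow]

lemma Pp_low (a e : ℕ) (he : e ≤ a) :
    (Pp a).coeff e = if e = 1 then 1 else 0 := by
  rw [Pp_fact, Polynomial.coeff_add, Polynomial.coeff_X_pow_mul',
    if_neg (by omega : ¬ a+1 ≤ e), add_zero, Polynomial.coeff_X]
  by_cases h1 : e = 1
  · rw [if_pos h1.symm, if_pos h1]
  · rw [if_neg (fun hc => h1 hc.symm), if_neg h1]

/-- Polynomial version of the α-sum. -/
noncomputable def Ap (a : ℕ) : Polynomial ℝ :=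
  ∑ t ∈ Finset.Icc 1 (a + 2), Polynomial.C (α a t) * Polynomial.X ^ (a + t)

lemma Ap_coeff (a e : ℕ) :
    (Ap a).coeff e = ∑ t ∈ Finset.Icc 1 (a + 2), (if a + t = e then α a t else 0) := by
  simp only [Ap, Polynomial.finset_sum_coeff, Polynomial.coeff_C_mul,
    Polynomial.coeff_X_pow]
  apply Finset.sum_congr rfl
  intro t _
  by_cases h : a + t = e
  · simp [h]
  · simp [h, fun hh => h ((Eq.symm hh : e = a + t) ▸ rfl)]
    intro hh; exact absurd hh.symm h

lemma Ap_eq (a : ℕ) :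
    Ap a = Pp a - Polynomial.X
      + Polynomial.C (2 * ((a : ℝ) + 1) * (catalan a : ℝ))
        * (Polynomial.X * (1 - Polynomial.X)) ^ (a + 1) := by
  have hW : ∀ i, 1 ≤ i → ∀ j, W i j = (-1:ℝ)^j * (i.choose j : ℝ) * (catalan (i-1) : ℝ) := by
    intro i hi j
    unfold W
    by_cases hj : j ≤ i
    · rw [if_pos ⟨hi, hj⟩]
    · rw [if_neg (fun hc => hj hc.2), Nat.choose_eq_zero_of_lt (by omega)]
      simp
  have hXe : ∀ e : ℕ, (Polynomial.X : Polynomial ℝ).coeff e = if e = 1 then 1 else 0 := by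
    intro e
    rw [Polynomial.coeff_X]
    by_cases h1 : e = 1
    · rw [if_pos h1.symm, if_pos h1]
    · rw [if_neg (fun hc => h1 hc.symm), if_neg h1]
  apply Polynomial.ext
  intro e
  rw [Ap_coeff]
  rcases Nat.lt_or_ge e (a+1) with h1 | h1
  · -- low case: e ≤ a
    rw [Finset.sum_eq_zero (fun x hx => if_neg (by simp only [Finset.mem_Icc] at hx; omega)),
      Polynomial.coeff_add, Polynomial.coeff_sub, Pp_low a e (by omega),
      Polynomial.coeff_C_mul, coeff_XX_pow, if_neg (by omega : ¬ a+1 ≤ e), mul_zero, add_zero,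
      hXe]
    by_cases he : e = 1 <;> simp [he]
  · rcases Nat.lt_or_ge (2*a+2) e with h2 | h2
    · -- high case: e ≥ 2a+3
      rw [Finset.sum_eq_zero (fun x hx => if_neg (by simp only [Finset.mem_Icc] at hx; omega)),
        Polynomial.coeff_add, Polynomial.coeff_sub, Pp_coeff, Polynomial.coeff_C_mul,
        coeff_XX_pow, hXe, if_neg (show ¬ e = 1 by omega), if_pos (show a+1 ≤ e by omega),
        Nat.choose_eq_zero_of_lt (show a+1 < e - (a+1) by omega),
        Finset.sum_eq_zero (fun i hi => by
          simp only [Finset.mem_Icc] at hi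
          rw [if_pos (show i ≤ e by omega), Nat.choose_eq_zero_of_lt (show i < e - i by omega)]
          norm_num)]
      norm_num
    · -- main case: a+1 ≤ e ≤ 2a+2
      set t := e - a with htdef
      have hte : a + t = e := by omega
      rw [Finset.sum_eq_single t
        (fun b hb hne => if_neg (fun hc => hne (by simp only [Finset.mem_Icc] at hb; omega)))
        (fun hnot => absurd (Finset.mem_Icc.mpr ⟨by omega, by omega⟩) hnot),
        if_pos hte,
        Polynomial.coeff_add, Polynomial.coeff_sub, Pp_coeff, Polynomial.coeff_C_mul,
        coeff_XX_pow, if_pos (show a+1 ≤ e by omega), hXe]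
      unfold α
      have hR : ∑ x ∈ Finset.Icc 1 a, (catalan (x-1) : ℝ) *
            (if x ≤ e then (-1:ℝ)^(e-x) * (x.choose (e-x) : ℝ) else 0)
          = ∑ x ∈ Finset.Icc 1 a, W x (a + t - x) := by
        apply Finset.sum_congr rfl
        intro i hi
        simp only [Finset.mem_Icc] at hi
        rw [show a + t - i = e - i by omega, hW i (by omega), if_pos (show i ≤ e by omega)]
        ring
      rw [hR, hW (a+1) (by omega) (t-1), show (a+1) - 1 = a from rfl,
        show t - 1 = e - (a+1) by omega]
      have hind : (if a = 0 ∧ t = 1 then (1:ℝ) else 0) = (if e = 1 then 1 else 0) := by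
        by_cases hh : e = 1
        · rw [if_pos hh, if_pos (by omega)]
        · rw [if_neg hh, if_neg (by rintro ⟨ha0, ht1⟩; omega)]
      rw [hind]
      ring

lemma main2 (a : ℕ) (θ : ℝ) :
    ∑ t ∈ Finset.Icc 1 (a + 2), α a t * θ ^ (a + t)
      = G a θ - θ + 2 * ((a : ℝ) + 1) * (catalan a : ℝ) * (θ * (1 - θ)) ^ (a + 1) := by
  have h := congrArg (Polynomial.eval θ) (Ap_eq a)
  have hL : (Ap a).eval θ = ∑ t ∈ Finset.Icc 1 (a+2), α a t * θ^(a+t) := by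
    simp [Ap, Polynomial.eval_finset_sum]
  rw [hL, Polynomial.eval_add, Polynomial.eval_sub, Pp_eval, Polynomial.eval_X,
    Polynomial.eval_mul, Polynomial.eval_C, Polynomial.eval_pow, Polynomial.eval_mul,
    Polynomial.eval_sub, Polynomial.eval_one, Polynomial.eval_X] at h
  rw [h]

theorem accuracy_expanded_polynomial_form (a : ℕ) (θ : ℝ) :
    acc (2 * a + 1) θ = 1 - θ - ∑ t ∈ Finset.Icc 1 (a + 2), α a t * θ ^ (a + t) := by
  rw [main2, main1]
  ring
end

section
/- Define T_{k,n}(θ) := w_{k,n}(θ) · binom(k,n) · θ^n · (1−θ)^{k−n} for integers 0 ≤ n ≤ k and T_{k,n}(θ) := 0 otherwise, where w_{k,n}(θ) := 1−θ if 2n < k, := 1/2 if 2n = k, and := θ if 2n > k. Define forward and backward weights by W→_{k,n}(θ) := 2θ² if 2n = k and := θ otherwise, and W←_{k,n}(θ) := 2(1−θ)² if 2n = k and := 1−θ otherwise. Then for every natural number k, every integer n, and every real θ, one has T_{k+1, n+1}(θ) = W→_{k,n}(θ)·T_{k,n}(θ) + W←_{k,n+1}(θ)·T_{k,n+1}(θ).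 -/
/-- The summand `T_{k,n}`, defined for integer `n` and zero outside `0 ≤ n ≤ k`. -/
noncomputable def T (k : ℕ) (n : ℤ) (θ : ℝ) : ℝ :=
  if 0 ≤ n ∧ n ≤ (k : ℤ) then
    w k n.toNat θ * (k.choose n.toNat : ℝ) * θ ^ n.toNat * (1 - θ) ^ (k - n.toNat)
  else 0

/-- The forward weight `W→_{k,n}`. -/
noncomputable def Wf (k : ℕ) (n : ℤ) (θ : ℝ) : ℝ :=
  if 2 * n = (k : ℤ) then 2 * θ ^ 2 else θ

/-- The backward weight `W←_{k,n}`. -/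
noncomputable def Wb (k : ℕ) (n : ℤ) (θ : ℝ) : ℝ :=
  if 2 * n = (k : ℤ) then 2 * (1 - θ) ^ 2 else 1 - θ

lemma T_nat (k m : ℕ) (θ : ℝ) (h : m ≤ k) :
    T k (m : ℤ) θ = w k m θ * (k.choose m : ℝ) * θ ^ m * (1 - θ) ^ (k - m) := by
  simp only [T, Int.toNat_natCast]
  rw [if_pos ⟨by positivity, by exact_mod_cast h⟩]

theorem T_recursion (k : ℕ) (n : ℤ) (θ : ℝ) :
    T (k + 1) (n + 1) θ = Wf k n θ * T k n θ + Wb k (n + 1) θ * T k (n + 1) θ := by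
  rcases le_or_gt 0 n with hn | hn
  · rcases le_or_gt n k with hk | hk
    · -- interior: n = m with m ≤ k
      obtain ⟨m, rfl⟩ := Int.eq_ofNat_of_zero_le hn
      have hm : m ≤ k := by exact_mod_cast hk
      have e1 : ((m : ℤ) + 1) = ((m + 1 : ℕ) : ℤ) := by push_cast; ring
      rw [e1]
      rcases eq_or_lt_of_le hm with rfl | hmk
      · -- m = k : T k (m+1) = 0
        have h0 : T m ((m + 1 : ℕ) : ℤ) θ = 0 := by
          simp only [T]; rw [if_neg (by omega)]
        rw [h0, T_nat _ _ _ (le_refl _), T_nat _ _ _ (by omega)]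
        simp only [w, Wf, Nat.choose_self, Nat.sub_self]
        split_ifs <;> first | (exfalso; omega) | (push_cast; ring)
      · -- m < k
        obtain ⟨j, rfl⟩ : ∃ j, k = m + 1 + j := ⟨k - (m + 1), by omega⟩
        rw [T_nat _ _ _ (by omega), T_nat _ _ _ (by omega), T_nat _ _ _ (by omega)]
        have h1 : m + 1 + j - m = j + 1 := by omega
        have h2 : m + 1 + j - (m + 1) = j := by omega
        have h3 : m + 1 + j + 1 - (m + 1) = j + 1 := by omega
        have hp : ((m + 1 + j + 1).choose (m + 1) : ℝ) =
            ((m + 1 + j).choose m : ℝ) + ((m + 1 + j).choose (m + 1) : ℝ) := by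
          rw [show m + 1 + j + 1 = (m + j + 1) + 1 by omega, Nat.choose_succ_succ',
            show m + j + 1 = m + 1 + j by omega]
          push_cast; ring
        rw [h1, h2, h3, hp]
        simp only [w, Wf, Wb]
        split_ifs
        any_goals (exfalso; omega)
        any_goals ring1
        all_goals (
          have hsym : ((m + 1 + j).choose m : ℝ) = ((m + 1 + j).choose (m + 1) : ℝ) := by
            have := Nat.choose_symm (n := m + 1 + j) (k := m + 1) (by omega)
            rw [show m + 1 + j - (m + 1) = m by omega] at this
            exact_mod_cast this
          rw [hsym]; ring)
    · -- n > k : everything vanishes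
      simp only [T]
      rw [if_neg (by omega), if_neg (by omega), if_neg (by omega)]
      ring
  · rcases eq_or_lt_of_le (by omega : n ≤ -1) with rfl | hn1
    · -- n = -1
      have h0 : T k (-1) θ = 0 := by simp only [T]; rw [if_neg (by omega)]
      rw [show (-1 : ℤ) + 1 = ((0 : ℕ) : ℤ) by norm_num, h0,
        T_nat _ _ _ (Nat.zero_le _), T_nat _ _ _ (Nat.zero_le _)]
      simp only [w, Wb, Nat.choose_zero_right, Nat.sub_zero, pow_zero]
      split_ifs <;> first | (exfalso; omega) | (push_cast; ring)
    · -- n < -1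
      simp only [T]
      rw [if_neg (by omega), if_neg (by omega), if_neg (by omega)]
      ring
end

section
/- For every natural number k and every real number θ with 0 < θ < 1 and θ ≠ 1/2, the accuracy of the frequent outcome approach is strictly below the accuracy of ideal prediction: π_k(θ) < max(θ, 1−θ). -/
open Finset

theorem accuracy_lt_ideal (k : ℕ) (θ : ℝ) (h0 : 0 < θ) (h1 : θ < 1) (hne : θ ≠ 1 / 2) :
    acc k θ < max θ (1 - θ) := by
  set M := max θ (1 - θ) with hM
  have h1θ : 0 < 1 - θ := by linarith
  have hθM : θ ≤ M := le_max_left _ _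
  have h1M : 1 - θ ≤ M := le_max_right _ _
  have hhalf : 1 / 2 ≤ M := by
    rcases le_total θ (1/2) with h | h
    · exact le_trans (by linarith) h1M
    · exact le_trans h hθM
  have hp : ∀ n ∈ Finset.range (k + 1),
      0 < (k.choose n : ℝ) * θ ^ n * (1 - θ) ^ (k - n) := by
    intro n hn
    rw [Finset.mem_range] at hn
    have : 0 < k.choose n := Nat.choose_pos (by omega)
    positivity
  have hwle : ∀ n, w k n θ ≤ M := by
    intro n
    unfold w
    split_ifs <;> assumption
  have hsum : ∑ n ∈ Finset.range (k + 1),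
      (k.choose n : ℝ) * θ ^ n * (1 - θ) ^ (k - n) = 1 := by
    calc ∑ n ∈ Finset.range (k + 1), (k.choose n : ℝ) * θ ^ n * (1 - θ) ^ (k - n)
        = ∑ n ∈ Finset.range (k + 1), θ ^ n * (1 - θ) ^ (k - n) * (k.choose n : ℝ) :=
          Finset.sum_congr rfl (fun n _ => by ring)
      _ = (θ + (1 - θ)) ^ k := (add_pow θ (1 - θ) k).symm
      _ = 1 := by norm_num
  have key : acc k θ < ∑ n ∈ Finset.range (k + 1),
      M * ((k.choose n : ℝ) * θ ^ n * (1 - θ) ^ (k - n)) := by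
    unfold acc
    apply Finset.sum_lt_sum
    · intro n hn
      have hpn := hp n hn
      have := hwle n
      nlinarith [hp n hn]
    · rcases lt_or_gt_of_ne hne with h | h
      · refine ⟨k, Finset.self_mem_range_succ k, ?_⟩
        have hpn := hp k (Finset.self_mem_range_succ k)
        have hw : w k k θ ≤ max θ (1/2) := by
          unfold w; split_ifs with hc1 hc2
          · omega
          · exact le_max_right _ _
          · exact le_max_left _ _
        have hM' : max θ (1/2) < M := by
          rw [hM]
          apply max_lt <;> [linarith [le_max_right θ (1-θ)]; linarith [le_max_right θ (1-θ)]]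
        nlinarith
      · refine ⟨0, Finset.mem_range.mpr (by omega), ?_⟩
        have hpn := hp 0 (Finset.mem_range.mpr (by omega))
        have hw : w k 0 θ ≤ max (1 - θ) (1/2) := by
          unfold w; split_ifs with hc1 hc2
          · exact le_max_left _ _
          · exact le_max_right _ _
          · omega
        have hM' : max (1 - θ) (1/2) < M := by
          rw [hM]
          apply max_lt <;> [linarith [le_max_left θ (1-θ)]; linarith [le_max_left θ (1-θ)]]
        nlinarith
  calc acc k θ < ∑ n ∈ Finset.range (k + 1),
      M * ((k.choose n : ℝ) * θ ^ n * (1 - θ) ^ (k - n)) := key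
    _ = M * ∑ n ∈ Finset.range (k + 1),
      (k.choose n : ℝ) * θ ^ n * (1 - θ) ^ (k - n) := by rw [Finset.mul_sum]
    _ = M := by rw [hsum, mul_one]
end
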